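/- arXiv:1909.12394 — 5 statements merged into one kernel-verified Lean document; each statement's English description precedes it below -/
import Mathlib

section
/- Every connected simple graph on n ≥ 2 vertices that is not a tree has strictly more than 2^(n-1) acyclic orientations. -/
open MvPolynomial Finset
open scoped Classical

noncomputable section

/-- The Schur polynomial `s_μ` in `n` variables, defined via the Jacobi–Trudi
identity `s_μ = det (h_{μ_i - i + j})`. -/
def schurPart (n : ℕ) (μ : n.Partition) : MvPolynomial (Fin n) ℚ :=
  letI L := (μ.parts.sort (· ≤ ·)).reverse
  Matrix.det (Matrix.of fun i j : Fin L.length =>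
    if (i : ℕ) ≤ L.get i + (j : ℕ) then hsymm (Fin n) ℚ (L.get i + (j : ℕ) - (i : ℕ)) else 0)

/-- The chromatic symmetric function of a graph `G`, restricted to `n` variables:
the sum over proper colorings `κ : V → Fin n` of the monomials `∏ x_{κ v}`. -/
def csf {V : Type} [Fintype V] (n : ℕ) (G : SimpleGraph V) : MvPolynomial (Fin n) ℚ :=
  ∑ κ ∈ (univ : Finset (V → Fin n)).filter (fun κ => ∀ u v, G.Adj u v → κ u ≠ κ v),
    ∏ v, X (κ v)

/-- The chromatic polynomial of `G` evaluated at `k`: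
the number of proper colorings of `G` with `k` colors. -/
def chromPoly {V : Type} [Fintype V] (G : SimpleGraph V) (k : ℕ) : ℕ :=
  Nat.card (G.Coloring (Fin k))

/-- `r` is an acyclic orientation of `G`: it chooses exactly one direction for every
edge of `G̀` and has no directed cycles. -/
def IsAcyclicOrientation {V : Type} (G : SimpleGraph V) (r : V → V → Prop) : Prop :=
  (∀ u v, r u v → G.Adj u v) ∧ (∀ u v, G.Adj u v → (r u v ↔ ¬ r v u)) ∧
    ∀ v, ¬ Relation.TransGen r v v

/-- The number of acyclic orientations of `G`. -/
def acyclicOrientationCount {V : Type} (G : SimpleGraph V) : ℕ :=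
  Nat.card {r : V → V → Prop // IsAcyclicOrientation G r}

/-- The independence number of `G`. -/
def indepNum {V : Type} [Fintype V] (G : SimpleGraph V) : ℕ :=
  ((univ : Finset (Finset V)).filter fun s => ∀ a ∈ s, ∀ b ∈ s, a ≠ b → ¬ G.Adj a b).sup
    Finset.card

/-- The partition `(1^n)` of `n`. -/
def onesP (n : ℕ) : n.Partition :=
  Nat.Partition.ofSums n (Multiset.replicate n 1) (by simp)

/-- The hook partition `(a, 1^{n-a})` of `n` (defined for all `a` via `min a n`). -/
def hookP (n a : ℕ) : n.Partition :=
  Nat.Partition.ofSums n (min a n ::ₘ Multiset.replicate (n - a) 1)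
    (by simp [Multiset.sum_replicate]; omega)

/-- The two-part partition `(a, b)` of `n = a + b`. -/
def twoP (n a b : ℕ) (h : a + b = n) : n.Partition :=
  Nat.Partition.ofSums n {a, b} (by simpa using h)

namespace NonTreeAux

open SimpleGraph

variable {V : Type}

lemma dart_snd_mem_support_tail {G : SimpleGraph V} :
    ∀ {x y : V} (p : G.Walk x y) (d : G.Dart), d ∈ p.darts → d.snd ∈ p.support.tail := by
  intro x y p
  induction p with
  | nil => intro d hd; simp at hd
  | cons h q ih =>
    intro d hd
    rw [Walk.darts_cons, List.mem_cons] at hd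
    rw [Walk.support_cons, List.tail_cons]
    rcases hd with rfl | hd
    · exact q.start_mem_support
    · exact List.mem_of_mem_tail (ih d hd)

lemma exists_directed_path {T : SimpleGraph V} (hT : T.IsAcyclic) {r : V → V → Prop}
    (hr : ∀ u v, r u v → T.Adj u v) (has : ∀ u v, r u v → ¬ r v u) :
    ∀ {a b : V}, Relation.TransGen r a b →
      ∃ p : T.Walk a b, p.IsPath ∧ 0 < p.length ∧ ∀ d ∈ p.darts, r d.toProd.1 d.toProd.2 := by
  classical
  intro a b h
  induction h with
  | single hab =>
    refine ⟨Walk.cons (hr _ _ hab) Walk.nil, ?_, by simp, ?_⟩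
    · simp [Walk.cons_isPath_iff, (hr _ _ hab).ne]
    · intro d hd
      simp only [Walk.darts_cons, Walk.darts_nil, List.mem_singleton] at hd
      subst hd
      exact hab
  | @tail b c hab hbc ih =>
    obtain ⟨p, hp, hlen, hdir⟩ := ih
    have hbc' : T.Adj b c := hr _ _ hbc
    by_cases hc : c ∈ p.support
    · -- derive a contradiction: a cycle in T
      exfalso
      set q := p.dropUntil c hc with hq
      have hqp : q.IsPath := hp.dropUntil hc
      have hqdir : ∀ d ∈ q.darts, r d.toProd.1 d.toProd.2 := fun d hd =>
        hdir d (p.darts_dropUntil_subset hc hd)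
      have he : s(b, c) ∉ q.edges := by
        intro hmem
        rw [Walk.edges, List.mem_map] at hmem
        obtain ⟨d, hd, hde⟩ := hmem
        have hde' : s(d.fst, d.snd) = s(b, c) := hde
        rw [Sym2.eq_iff] at hde'
        rcases hde' with ⟨h1, h2⟩ | ⟨h1, h2⟩
        · have hct : d.snd ∈ q.support.tail := dart_snd_mem_support_tail q d hd
          have hdc : d.snd = c := h2
          rw [hdc] at hct
          have hnodup := hqp.support_nodup
          rw [q.support_eq_cons] at hnodup
          exact (List.nodup_cons.mp hnodup).1 hct
        · have hrcb : r c b := by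
            have := hqdir d hd
            rwa [show d.toProd.1 = c from h1, show d.toProd.2 = b from h2] at this
          exact has _ _ hbc hrcb
      have hcyc : (Walk.cons hbc' q).IsCycle :=
        (Walk.cons_isCycle_iff q hbc').mpr ⟨hqp, he⟩
      exact hT _ hcyc
    · refine ⟨p.concat hbc', ?_, ?_, ?_⟩
      · rw [← Walk.isPath_reverse_iff, Walk.reverse_concat, Walk.cons_isPath_iff]
        exact ⟨hp.reverse, by simpa using hc⟩
      · rw [Walk.length_concat]; omega
      · intro d hd
        rw [Walk.darts_concat] at hd
        simp only [List.concat_eq_append, List.mem_append, List.mem_singleton] at hd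
        rcases hd with hd | rfl
        · exact hdir d hd
        · exact hbc

/-- Any partial orientation of an acyclic graph has no directed cycles. -/
lemma acyclic_of_forest {T : SimpleGraph V} (hT : T.IsAcyclic) {r : V → V → Prop}
    (hr : ∀ u v, r u v → T.Adj u v) (has : ∀ u v, r u v → ¬ r v u) (v : V) :
    ¬ Relation.TransGen r v v := by
  intro h
  obtain ⟨p, hp, hlen, -⟩ := exists_directed_path hT hr has h
  rw [Walk.isPath_iff_eq_nil] at hp
  subst hp
  simp at hlen

lemma exists_linear_ext (r : V → V → Prop) (hac : ∀ v, ¬ Relation.TransGen r v v) :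
    ∃ s : V → V → Prop, IsLinearOrder V s ∧ ∀ x y, Relation.ReflTransGen r x y → s x y := by
  haveI : IsPartialOrder V (Relation.ReflTransGen r) :=
    { refl := fun _ => Relation.ReflTransGen.refl
      trans := fun _ _ _ hab hbc => hab.trans hbc
      antisymm := fun a b hab hba => by
        by_contra hne
        rcases hab.cases_head with rfl | ⟨c, hac', hcb⟩
        · exact hne rfl
        · exact hac a (Relation.TransGen.head' hac' (hcb.trans hba)) }
  obtain ⟨s, hs, hsub⟩ := extend_partialOrder (Relation.ReflTransGen r)
  exact ⟨s, hs, fun x y h => hsub _ _ h⟩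

/-- The orientation of `G` induced by a linear order relation `s` is acyclic. -/
lemma isAcyclicOrientation_of_linear (G : SimpleGraph V) (s : V → V → Prop)
    (hs : IsLinearOrder V s) :
    IsAcyclicOrientation G (fun u v => G.Adj u v ∧ s u v ∧ u ≠ v) := by
  have htot := hs.total
  have hanti := hs.antisymm
  have htrans := hs.trans
  refine ⟨fun u v h => h.1, ?_, ?_⟩
  · intro u v h
    constructor
    · rintro ⟨-, hsuv, hne⟩ ⟨-, hsvu, -⟩
      exact hne (hanti _ _ hsuv hsvu)
    · intro hn
      refine ⟨h, ?_, h.ne⟩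
      rcases htot u v with hs' | hs'
      · exact hs'
      · exact absurd ⟨h.symm, hs', h.ne.symm⟩ hn
  · intro v hv
    have key : ∀ a b, Relation.TransGen (fun u v => G.Adj u v ∧ s u v ∧ u ≠ v) a b →
        s a b ∧ a ≠ b := by
      intro a b h
      induction h with
      | single h => exact ⟨h.2.1, h.2.2⟩
      | tail hab hbc ih =>
        refine ⟨htrans _ _ _ ih.1 hbc.2.1, ?_⟩
        rintro rfl
        exact hbc.2.2 (hanti _ _ hbc.2.1 ih.1)
    exact (key v v hv).2 rfl

/-- Every connected graph contains a spanning tree. -/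
lemma exists_isTree_le [Fintype V] :
    ∀ (m : ℕ) (G : SimpleGraph V), Nat.card G.edgeSet ≤ m → G.Connected → ∃ T ≤ G, T.IsTree := by
  classical
  intro m
  induction m with
  | zero =>
    intro G hcard hconn
    refine ⟨G, le_refl G, hconn, ?_⟩
    intro v c hc
    have h3 := hc.three_le_length
    have hne : c.edges ≠ [] := by
      intro h
      have := congrArg List.length h
      rw [Walk.length_edges, List.length_nil] at this
      omega
    obtain ⟨e, he⟩ := List.exists_mem_of_ne_nil _ hne
    have heG : e ∈ G.edgeSet := c.edges_subset_edgeSet he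
    have hpos : 0 < Nat.card G.edgeSet := by
      rw [Nat.card_coe_set_eq]
      exact (Set.ncard_pos (Set.toFinite _)).mpr ⟨e, heG⟩
    exact (hpos.trans_le hcard).false
  | succ m ih =>
    intro G hcard hconn
    by_cases hac : G.IsAcyclic
    · exact ⟨G, le_refl G, hconn, hac⟩
    · rw [isAcyclic_iff_forall_adj_isBridge] at hac
      push_neg at hac
      obtain ⟨v, w, hvw, hbr⟩ := hac
      rw [isBridge_iff] at hbr
      push_neg at hbr
      have hreach := hbr
      set G' := G \ fromEdgeSet {s(v, w)} with hG'
      have hle : G' ≤ G := sdiff_le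
      have hconn' : G'.Connected := by
        rw [connected_iff]
        refine ⟨?_, hconn.nonempty⟩
        intro x y
        obtain ⟨p⟩ := hconn.preconnected x y
        clear hcard
        induction p with
        | nil => exact Reachable.refl _
        | cons h q ihq =>
          rename_i x' z' y' 
          refine Reachable.trans ?_ ihq
          by_cases he : s(x', z') = s(v, w)
          · rw [Sym2.eq_iff] at he
            rcases he with ⟨rfl, rfl⟩ | ⟨rfl, rfl⟩
            · exact hreach
            · exact hreach.symm
          · exact Adj.reachable (by
              rw [hG', sdiff_adj]
              exact ⟨h, by simp [fromEdgeSet_adj, he]⟩)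
      have hcard' : Nat.card G'.edgeSet ≤ m := by
        have hnot : s(v, w) ∉ G'.edgeSet := by
          rw [mem_edgeSet, hG', sdiff_adj]
          rintro ⟨-, hn⟩
          exact hn (by simp [fromEdgeSet_adj, hvw.ne])
        have hmem : s(v, w) ∈ G.edgeSet := hvw
        have hss : G'.edgeSet ⊂ G.edgeSet :=
          ⟨edgeSet_mono hle, fun hcon => hnot (hcon hmem)⟩
        have hlt := Set.ncard_lt_ncard hss (Set.toFinite _)
        rw [Nat.card_coe_set_eq] at hcard ⊢
        omega
      obtain ⟨T, hT1, hT2⟩ := ih G' hcard' hconn'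
      exact ⟨T, le_trans hT1 hle, hT2⟩

/-- The orientation of `G` along an injective rank function `m`. -/
def Rlin (G : SimpleGraph V) (m : V → ℕ) : V → V → Prop :=
  fun u v => G.Adj u v ∧ m u < m v

/-- `Rlin G m` with the single edge `a-b` flipped. -/
def Rflip (G : SimpleGraph V) (m : V → ℕ) (a b : V) : V → V → Prop :=
  fun u v => if u = a ∧ v = b then True else if u = b ∧ v = a then False else Rlin G m u v

lemma isAcyclicOrientation_Rlin (G : SimpleGraph V) (m : V → ℕ)
    (hinj : ∀ u v, m u = m v → u = v) : IsAcyclicOrientation G (Rlin G m) := by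
  refine ⟨fun u v h => h.1, ?_, ?_⟩
  · intro u v h
    have hne : m u ≠ m v := fun hh => h.ne (hinj _ _ hh)
    constructor
    · rintro ⟨-, hlt⟩ ⟨-, hlt'⟩
      omega
    · intro hn
      refine ⟨h, ?_⟩
      rcases Nat.lt_or_ge (m u) (m v) with h' | h'
      · exact h'
      · exact absurd ⟨h.symm, by omega⟩ hn
  · intro v hv
    have key : ∀ x y, Relation.TransGen (Rlin G m) x y → m x < m y := by
      intro x y h
      induction h with
      | single h => exact h.2
      | tail _ h ih => exact ih.trans h.2
    exact absurd (key v v hv) (lt_irrefl _)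

lemma isAcyclicOrientation_Rflip (G : SimpleGraph V) (m : V → ℕ) (a b : V)
    (hinj : ∀ u v, m u = m v → u = v) (hab : G.Adj a b) (hba : m b < m a)
    (htop : ∀ x, x ≠ a → m x ≤ m b) : IsAcyclicOrientation G (Rflip G m a b) := by
  have hne : a ≠ b := hab.ne
  have hsink : ∀ x, ¬ Rflip G m a b b x := by
    intro x hx
    unfold Rflip at hx
    rw [if_neg (fun hh : b = a ∧ x = b => hne hh.1.symm)] at hx
    by_cases h1 : x = a
    · rw [if_pos ⟨rfl, h1⟩] at hx
      exact hx
    · rw [if_neg (fun hh : b = b ∧ x = a => h1 hh.2)] at hx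
      have := htop x h1
      have := hx.2
      omega
  refine ⟨?_, ?_, ?_⟩
  · intro u v h
    unfold Rflip at h
    by_cases h1 : u = a ∧ v = b
    · rw [h1.1, h1.2]; exact hab
    · rw [if_neg h1] at h
      by_cases h2 : u = b ∧ v = a
      · rw [if_pos h2] at h; exact h.elim
      · rw [if_neg h2] at h; exact h.1
  · intro u v h
    have huv : u ≠ v := h.ne
    by_cases h1 : u = a ∧ v = b
    · constructor
      · intro _ hvu
        unfold Rflip at hvu
        rw [if_neg (fun hh : v = a ∧ u = b => hne (h1.1.symm.trans hh.2)),
          if_pos ⟨h1.2, h1.1⟩] at hvu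
        exact hvu
      · intro _
        unfold Rflip
        rw [if_pos h1]
        trivial
    · by_cases h2 : u = b ∧ v = a
      · constructor
        · intro huv'
          unfold Rflip at huv'
          rw [if_neg (fun hh : u = a ∧ v = b => hne (hh.1.symm.trans h2.1)), if_pos h2] at huv'
          exact huv'.elim
        · intro hn
          exfalso
          apply hn
          unfold Rflip
          rw [if_pos ⟨h2.2, h2.1⟩]
          trivial
      · have h2' : ¬ (v = a ∧ u = b) := fun hh => h2 ⟨hh.2, hh.1⟩
        have h1' : ¬ (v = b ∧ u = a) := fun hh => h1 ⟨hh.2, hh.1⟩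
        have e1 : Rflip G m a b u v = Rlin G m u v := by
          unfold Rflip
          rw [if_neg h1, if_neg h2]
        have e2 : Rflip G m a b v u = Rlin G m v u := by
          unfold Rflip
          rw [if_neg h2', if_neg h1']
        rw [e1, e2]
        exact (isAcyclicOrientation_Rlin G m hinj).2.1 u v h
  · intro v hv
    have key : ∀ x y, Relation.TransGen (Rflip G m a b) x y →
        x ≠ b ∧ (m x < m y ∨ (y = b ∧ m x ≤ m a)) := by
      intro x y h
      induction h with
      | @single y h =>
        refine ⟨fun hh => hsink _ (hh ▸ h), ?_⟩
        unfold Rflip at h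
        by_cases h1 : x = a ∧ y = b
        · right
          exact ⟨h1.2, by rw [h1.1]⟩
        · rw [if_neg h1] at h
          by_cases h2 : x = b ∧ y = a
          · rw [if_pos h2] at h; exact h.elim
          · rw [if_neg h2] at h
            left; exact h.2
      | @tail w c hxw hwc ih =>
        obtain ⟨hxb, hm⟩ := ih
        have hwb : w ≠ b := fun hh => hsink _ (hh ▸ hwc)
        have hxw' : m x < m w := by
          rcases hm with h' | ⟨h', -⟩
          · exact h'
          · exact absurd h' hwb
        refine ⟨hxb, ?_⟩
        unfold Rflip at hwc
        by_cases h1 : w = a ∧ c = b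
        · right
          refine ⟨h1.2, ?_⟩
          rw [← h1.1]
          omega
        · rw [if_neg h1] at hwc
          by_cases h2 : w = b ∧ c = a
          · rw [if_pos h2] at hwc; exact hwc.elim
          · rw [if_neg h2] at hwc
            left
            exact hxw'.trans hwc.2
    obtain ⟨hvb, hm⟩ := key v v hv
    rcases hm with h' | ⟨h', -⟩
    · omega
    · exact hvb h'

/-- The orientation of the edges of `T` encoded by a boolean function on its edge set,
using the canonical representative `Quot.out` of each edge. -/
def rOf (T : SimpleGraph V) (f : T.edgeSet → Bool) : V → V → Prop := fun u v =>
  ∃ h : T.Adj u v,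
    ((⟨s(u, v), T.mem_edgeSet.mpr h⟩ : T.edgeSet) : Sym2 V).out = (u, v) ∧
        f ⟨s(u, v), T.mem_edgeSet.mpr h⟩ = true ∨
      ((⟨s(u, v), T.mem_edgeSet.mpr h⟩ : T.edgeSet) : Sym2 V).out = (v, u) ∧
        f ⟨s(u, v), T.mem_edgeSet.mpr h⟩ = false

lemma rOf_adj {T : SimpleGraph V} {f : T.edgeSet → Bool} {u v : V} (h : rOf T f u v) :
    T.Adj u v := h.1

lemma rOf_iff {T : SimpleGraph V} (f : T.edgeSet → Bool) {u v : V} (h : T.Adj u v) :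
    rOf T f u v ↔
      (((⟨s(u, v), T.mem_edgeSet.mpr h⟩ : T.edgeSet) : Sym2 V).out = (u, v) ∧
          f ⟨s(u, v), T.mem_edgeSet.mpr h⟩ = true ∨
        ((⟨s(u, v), T.mem_edgeSet.mpr h⟩ : T.edgeSet) : Sym2 V).out = (v, u) ∧
          f ⟨s(u, v), T.mem_edgeSet.mpr h⟩ = false) :=
  ⟨fun ⟨_, hp⟩ => hp, fun hp => ⟨h, hp⟩⟩

lemma sym2_out_cases (u v : V) (s : Sym2 V) (hs : s = s(u, v)) :
    s.out = (u, v) ∨ s.out = (v, u) := by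
  have h1 : s(s.out.1, s.out.2) = s(u, v) := by
    rw [← hs]
    exact Quot.out_eq s
  rw [Sym2.eq_iff] at h1
  rcases h1 with ⟨h2, h3⟩ | ⟨h2, h3⟩
  · left; rw [← h2, ← h3]
  · right; rw [← h2, ← h3]

lemma rOf_orient {T : SimpleGraph V} (f : T.edgeSet → Bool) {u v : V} (h : T.Adj u v) :
    rOf T f u v ↔ ¬ rOf T f v u := by
  have huv : u ≠ v := h.ne
  have he' : (⟨s(v, u), T.mem_edgeSet.mpr h.symm⟩ : T.edgeSet)
      = ⟨s(u, v), T.mem_edgeSet.mpr h⟩ := Subtype.ext (Sym2.eq_swap)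
  rw [rOf_iff f h, rOf_iff f h.symm, he']
  rcases sym2_out_cases u v (⟨s(u, v), T.mem_edgeSet.mpr h⟩ : T.edgeSet) rfl with hout | hout <;>
    rw [hout] <;>
    cases hfe : f ⟨s(u, v), T.mem_edgeSet.mpr h⟩ <;>
    simp [Prod.ext_iff, huv, huv.symm]

/-- Reading off the boolean encoding of an orientation. -/
def phi (T : SimpleGraph V) (R : V → V → Prop) : T.edgeSet → Bool := fun e =>
  if R (e : Sym2 V).out.1 (e : Sym2 V).out.2 then true else false

lemma edge_adj_out {T : SimpleGraph V} (e : T.edgeSet) :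
    T.Adj (e : Sym2 V).out.1 (e : Sym2 V).out.2 := by
  have ho : s((e : Sym2 V).out.1, (e : Sym2 V).out.2) = (e : Sym2 V) := Quot.out_eq _
  have he2 : s((e : Sym2 V).out.1, (e : Sym2 V).out.2) ∈ T.edgeSet := by
    rw [ho]; exact e.2
  exact T.mem_edgeSet.mp he2

lemma phi_eq_of_agree {T : SimpleGraph V} {R : V → V → Prop} (f : T.edgeSet → Bool)
    (hAg : ∀ u v, T.Adj u v → (R u v ↔ rOf T f u v)) : phi T R = f := by
  funext e
  have ho : s((e : Sym2 V).out.1, (e : Sym2 V).out.2) = (e : Sym2 V) := Quot.out_eq _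
  have hadj : T.Adj (e : Sym2 V).out.1 (e : Sym2 V).out.2 := edge_adj_out e
  have hsub : (⟨s((e : Sym2 V).out.1, (e : Sym2 V).out.2), T.mem_edgeSet.mpr hadj⟩ : T.edgeSet)
      = e := Subtype.ext ho
  have hiff : R (e : Sym2 V).out.1 (e : Sym2 V).out.2 ↔ f e = true := by
    rw [hAg _ _ hadj, rOf_iff f hadj, hsub]
    constructor
    · rintro (⟨-, hf⟩ | ⟨hswap, -⟩)
      · exact hf
      · exfalso
        have heq : (e : Sym2 V).out.1 = (e : Sym2 V).out.2 := by
          have h1 := congrArg Prod.fst hswap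
          have h2 := congrArg Prod.snd hswap
          simp at h1 h2
          exact h1
        exact hadj.ne heq
    · intro hf
      left
      exact ⟨rfl, hf⟩
  show (if R (e : Sym2 V).out.1 (e : Sym2 V).out.2 then true else false) = f e
  by_cases hR : R (e : Sym2 V).out.1 (e : Sym2 V).out.2
  · rw [if_pos hR]
    exact (hiff.mp hR).symm
  · rw [if_neg hR]
    cases hfe : f e
    · rfl
    · exact absurd (hiff.mpr hfe) hR

lemma phi_congr {T : SimpleGraph V} {R R' : V → V → Prop}
    (hAg : ∀ u v, T.Adj u v → (R u v ↔ R' u v)) : phi T R = phi T R' := by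
  funext e
  have hadj : T.Adj (e : Sym2 V).out.1 (e : Sym2 V).out.2 := edge_adj_out e
  show (if R (e : Sym2 V).out.1 (e : Sym2 V).out.2 then true else false)
      = (if R' (e : Sym2 V).out.1 (e : Sym2 V).out.2 then true else false)
  by_cases hR : R (e : Sym2 V).out.1 (e : Sym2 V).out.2
  · rw [if_pos hR, if_pos ((hAg _ _ hadj).mp hR)]
  · rw [if_neg hR, if_neg (fun hh => hR ((hAg _ _ hadj).mpr hh))]

end NonTreeAux

open SimpleGraph NonTreeAux

/-- Every connected simple graph on `n ≥ 2` vertices that is not a tree has strictly more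
than `2^(n-1)` acyclic orientations. -/
theorem nonTree_acyclicOrientationCount {V : Type} [Fintype V] (n : ℕ)
    (hV : Fintype.card V = n) (hn : 2 ≤ n) (G : SimpleGraph V) (hconn : G.Connected)
    (hG : ¬ G.IsTree) :
    2 ^ (n - 1) < acyclicOrientationCount G := by
  classical
  obtain ⟨T, hTG, hT⟩ := exists_isTree_le (Nat.card G.edgeSet) G le_rfl hconn
  have hextra : ∃ a b : V, G.Adj a b ∧ ¬ T.Adj a b := by
    by_contra hcon
    push_neg at hcon
    have hGT : G ≤ T := fun u v h => hcon u v h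
    have hGeT : G = T := le_antisymm hGT hTG
    exact hG (hGeT ▸ hT)
  obtain ⟨a, b, hab, hnab⟩ := hextra
  have haneb : a ≠ b := hab.ne
  have emb : V ≃ Fin (Fintype.card V) := Fintype.equivFin V
  set N := Fintype.card V with hNdef
  set m : V → ℕ := fun v => if v = a then N + 1 else if v = b then N else (emb v : ℕ)
    with hmdef
  have hma : m a = N + 1 := by simp [hmdef]
  have hmb : m b = N := by simp [hmdef, Ne.symm haneb]
  have hmx : ∀ x, x ≠ a → x ≠ b → m x < N := by
    intro x h1 h2
    have hx : m x = (emb x : ℕ) := by simp [hmdef, h1, h2]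
    rw [hx]
    exact (emb x).isLt
  have hminj : ∀ u v : V, m u = m v → u = v := by
    intro u v h
    by_cases hu1 : u = a
    · by_cases hv1 : v = a
      · rw [hu1, hv1]
      · exfalso
        by_cases hv2 : v = b
        · rw [hu1, hma, hv2, hmb] at h; omega
        · have := hmx v hv1 hv2; rw [hu1, hma] at h; omega
    · by_cases hu2 : u = b
      · by_cases hv1 : v = a
        · exfalso; rw [hu2, hmb, hv1, hma] at h; omega
        · by_cases hv2 : v = b
          · rw [hu2, hv2]
          · exfalso; have := hmx v hv1 hv2; rw [hu2, hmb] at h; omega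
      · by_cases hv1 : v = a
        · exfalso; have := hmx u hu1 hu2; rw [hv1, hma] at h; omega
        · by_cases hv2 : v = b
          · exfalso; have := hmx u hu1 hu2; rw [hv2, hmb] at h; omega
          · have h1 : m u = (emb u : ℕ) := by simp [hmdef, hu1, hu2]
            have h2 : m v = (emb v : ℕ) := by simp [hmdef, hv1, hv2]
            rw [h1, h2] at h
            exact emb.injective (Fin.ext h)
  have hRor : IsAcyclicOrientation G (Rlin G m) := isAcyclicOrientation_Rlin G m hminj
  have hR'or : IsAcyclicOrientation G (Rflip G m a b) := by
    refine isAcyclicOrientation_Rflip G m a b hminj hab (by rw [hma, hmb]; omega) ?_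
    intro x hx
    by_cases h2 : x = b
    · rw [h2]
    · have := hmx x hx h2; rw [hmb]; omega
  have hext : ∀ f : T.edgeSet → Bool, ∃ Rx : V → V → Prop, IsAcyclicOrientation G Rx ∧
      phi T Rx = f := by
    intro f
    have hanti : ∀ u v, rOf T f u v → ¬ rOf T f v u := by
      intro u v h1
      exact (rOf_orient f (rOf_adj h1)).mp h1
    have hac : ∀ v, ¬ Relation.TransGen (rOf T f) v v :=
      acyclic_of_forest hT.IsAcyclic (fun u v h => rOf_adj h) hanti
    obtain ⟨s, hs, hsub⟩ := exists_linear_ext _ hac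
    refine ⟨fun u v => G.Adj u v ∧ s u v ∧ u ≠ v, isAcyclicOrientation_of_linear G s hs, ?_⟩
    apply phi_eq_of_agree
    intro u v hTuv
    constructor
    · rintro ⟨hadj, hsuv, hne⟩
      by_cases hr : rOf T f u v
      · exact hr
      · exfalso
        have hr' : rOf T f v u := (rOf_orient f hTuv.symm).mpr hr
        have hsvu : s v u := hsub _ _ (Relation.ReflTransGen.single hr')
        exact hne (hs.antisymm _ _ hsuv hsvu)
    · intro hr
      exact ⟨hTG hTuv, hsub _ _ (Relation.ReflTransGen.single hr), hTuv.ne⟩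
  set f₀ : T.edgeSet → Bool := phi T (Rlin G m) with hf₀
  have hphiR' : phi T (Rflip G m a b) = f₀ := by
    rw [hf₀]
    apply phi_congr
    intro u v hTuv
    have h1 : ¬ (u = a ∧ v = b) := by
      rintro ⟨rfl, rfl⟩; exact hnab hTuv
    have h2 : ¬ (u = b ∧ v = a) := by
      rintro ⟨rfl, rfl⟩; exact hnab hTuv.symm
    unfold Rflip
    rw [if_neg h1, if_neg h2]
  set ψ : (T.edgeSet → Bool) → {r : V → V → Prop // IsAcyclicOrientation G r} := fun f =>
    if f = f₀ then ⟨Rlin G m, hRor⟩ else ⟨(hext f).choose, (hext f).choose_spec.1⟩ with hψdef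
  have hψ : ∀ f, phi T (ψ f).1 = f := by
    intro f
    by_cases hf : f = f₀
    · rw [hψdef]
      simp only [if_pos hf]
      rw [hf, hf₀]
    · rw [hψdef]
      simp only [if_neg hf]
      exact (hext f).choose_spec.2
  set F : (T.edgeSet → Bool) ⊕ Unit → {r : V → V → Prop // IsAcyclicOrientation G r} :=
    Sum.elim ψ (fun _ => ⟨Rflip G m a b, hR'or⟩) with hFdef
  have hRneR' : (⟨Rlin G m, hRor⟩ : {r : V → V → Prop // IsAcyclicOrientation G r})
      ≠ ⟨Rflip G m a b, hR'or⟩ := by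
    intro hh
    have heq : Rlin G m = Rflip G m a b := congrArg Subtype.val hh
    have hflip : Rflip G m a b a b := by
      unfold Rflip
      rw [if_pos ⟨rfl, rfl⟩]
      trivial
    rw [← heq] at hflip
    have hlt := hflip.2
    rw [hma, hmb] at hlt
    omega
  have hFinj : Function.Injective F := by
    rintro (f | u) (g | u') hFeq
    · have h1 : phi T (ψ f).1 = phi T (ψ g).1 := by
        rw [show ψ f = ψ g from hFeq]
      rw [hψ f, hψ g] at h1
      rw [h1]
    · exfalso
      have h1 : phi T (ψ f).1 = f₀ := by
        rw [show ψ f = (⟨Rflip G m a b, hR'or⟩ :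
          {r : V → V → Prop // IsAcyclicOrientation G r}) from hFeq]
        exact hphiR'
      rw [hψ f] at h1
      have h2 : ψ f = ⟨Rlin G m, hRor⟩ := by
        rw [hψdef]
        simp only [if_pos h1]
      have h3 : (⟨Rlin G m, hRor⟩ : {r : V → V → Prop // IsAcyclicOrientation G r})
          = ⟨Rflip G m a b, hR'or⟩ := by
        rw [← h2]
        exact hFeq
      exact hRneR' h3
    · exfalso
      have h1 : phi T (ψ g).1 = f₀ := by
        rw [show ψ g = (⟨Rflip G m a b, hR'or⟩ :
          {r : V → V → Prop // IsAcyclicOrientation G r}) from hFeq.symm]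
        exact hphiR'
      rw [hψ g] at h1
      have h2 : ψ g = ⟨Rlin G m, hRor⟩ := by
        rw [hψdef]
        simp only [if_pos h1]
      have h3 : (⟨Rlin G m, hRor⟩ : {r : V → V → Prop // IsAcyclicOrientation G r})
          = ⟨Rflip G m a b, hR'or⟩ := by
        rw [← h2]
        exact hFeq.symm
      exact hRneR' h3
    · exact congrArg Sum.inr (Subsingleton.elim u u')
  have hcount := Nat.card_le_card_of_injective F hFinj
  have hcards : Nat.card T.edgeSet = n - 1 := by
    have hcardE := hT.card_edgeFinset
    have h1 : Nat.card T.edgeSet = T.edgeFinset.card := by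
      rw [Nat.card_eq_fintype_card, ← Set.toFinset_card]; congr 1
    omega
  have hgoal : Nat.card ((T.edgeSet → Bool) ⊕ Unit) = 2 ^ (n - 1) + 1 := by
    rw [Nat.card_sum, Nat.card_fun, hcards]
    have hb2 : Nat.card Bool = 2 := by
      rw [Nat.card_eq_fintype_card]; rfl
    have hu1 : Nat.card Unit = 1 := by
      rw [Nat.card_eq_fintype_card]; rfl
    rw [hb2, hu1]
  rw [hgoal] at hcount
  have hrfl : acyclicOrientationCount G
      = Nat.card {r : V → V → Prop // IsAcyclicOrientation G r} := rfl
  omega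
end
end

section
/- For any simple graph G on n vertices and any edge ε of G, the coefficient of e_{(n)} in X_G satisfies [e_{(n)}]X_G = [e_{(n)}]X_{G-ε} + (n/(n-1))·[e_{(n-1)}]X_{G/ε}, where G-ε denotes deletion of ε and G/ε denotes contraction along ε. -/
open MvPolynomial Finset
open scoped Classical

noncomputable section

/-- The contraction of the graph `G` along the edge between `u` and `v`:
the vertex `v` is removed and merged into `u`. -/
def contract {V : Type} (G : SimpleGraph V) (u v : V) : SimpleGraph {w : V // w ≠ v} where
  Adj a b := a ≠ b ∧ (G.Adj (a : V) (b : V) ∨ ((a : V) = u ∧ G.Adj v (b : V)) ∨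
    ((b : V) = u ∧ G.Adj (a : V) v))
  symm := by
    constructor
    rintro a b ⟨h1, h2⟩
    refine ⟨h1.symm, ?_⟩
    rcases h2 with h | ⟨h, h'⟩ | ⟨h, h'⟩
    · exact Or.inl h.symm
    · exact Or.inr (Or.inr ⟨h, h'.symm⟩)
    · exact Or.inr (Or.inl ⟨h, h'.symm⟩)
  loopless := ⟨fun a h => h.1 rfl⟩

/-- number of proper colorings with k colors -/
def pc {W : Type} [Fintype W] (H : SimpleGraph W) (k : ℕ) : ℕ :=
  ((univ : Finset (W → Fin k)).filter (fun κ => ∀ a b, H.Adj a b → κ a ≠ κ b)).card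

lemma desc_coeff_one : ∀ n : ℕ, 1 ≤ n →
    (descPochhammer ℚ n).coeff 1 = (-1)^(n-1) * (n-1).factorial := by
  intro n
  induction n with
  | zero => omega
  | succ m ih =>
    intro _
    rcases Nat.eq_or_lt_of_le (Nat.one_le_iff_ne_zero.mpr (by omega) : 1 ≤ m + 1) with h | h
    · rw [← h]; simp [descPochhammer_one]
    · have hm : 1 ≤ m := by omega
      rw [descPochhammer_succ_right]
      have h0 : (descPochhammer ℚ m).coeff 0 = 0 := by
        have := descPochhammer_ne_zero_eval_zero (R := ℚ) (n := m) (Nat.one_le_iff_ne_zero.mp hm)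
        rwa [Polynomial.coeff_zero_eq_eval_zero]
      have hnn : ((m : ℕ) : Polynomial ℚ) = Polynomial.C (m : ℚ) := by simp
      rw [mul_sub, Polynomial.coeff_sub, Polynomial.coeff_mul_X, hnn, Polynomial.coeff_mul_C, ih hm, h0]
      have : m + 1 - 1 = (m - 1) + 1 := by omega
      rw [this, pow_succ]
      have : (m - 1) + 1 = m := by omega
      rw [this]
      have hf := Nat.mul_factorial_pred (by omega : m ≠ 0)
      push_cast [← hf]
      ring

/-- the polynomial k ↦ ∏_{i ∈ μ} C(k, i) -/
def qpart {n : ℕ} (μ : n.Partition) : Polynomial ℚ :=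
  (μ.parts.map (fun i => Polynomial.C ((i.factorial : ℚ)⁻¹) * descPochhammer ℚ i)).prod

lemma qpart_eval {n : ℕ} (μ : n.Partition) (k : ℕ) :
    (qpart μ).eval (k : ℚ) = (μ.parts.map (fun i => (Nat.choose k i : ℚ))).prod := by
  rw [qpart, Polynomial.eval_multiset_prod]
  rw [Multiset.map_map]
  congr 1
  apply Multiset.map_congr rfl
  intro i _
  simp only [Function.comp_apply, Polynomial.eval_mul, Polynomial.eval_C,
    descPochhammer_eval_eq_descFactorial, Nat.descFactorial_eq_factorial_mul_choose]
  push_cast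
  rw [← mul_assoc,
    inv_mul_cancel₀ (by exact_mod_cast Nat.factorial_ne_zero i), one_mul]

lemma qpart_natDegree_le {n : ℕ} (μ : n.Partition) : (qpart μ).natDegree ≤ n := by
  calc (qpart μ).natDegree ≤ ((μ.parts.map (fun i => Polynomial.C ((i.factorial : ℚ)⁻¹) * descPochhammer ℚ i)).map Polynomial.natDegree).sum :=
        Polynomial.natDegree_multiset_prod_le _
    _ ≤ (μ.parts.map id).sum := by
        rw [Multiset.map_map]
        apply Multiset.sum_map_le_sum_map
        intro i _
        calc (Polynomial.C ((i.factorial : ℚ)⁻¹) * descPochhammer ℚ i).natDegree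
            ≤ (Polynomial.C ((i.factorial : ℚ)⁻¹)).natDegree + (descPochhammer ℚ i).natDegree :=
              Polynomial.natDegree_mul_le
          _ ≤ id i := by rw [Polynomial.natDegree_C, descPochhammer_natDegree]; simp
    _ = n := by rw [Multiset.map_id]; exact μ.parts_sum

lemma mul_coeff_one' (p q : Polynomial ℚ) :
    (p * q).coeff 1 = p.coeff 0 * q.coeff 1 + p.coeff 1 * q.coeff 0 := by
  rw [Polynomial.coeff_mul, Finset.Nat.sum_antidiagonal_eq_sum_range_succ_mk]
  rw [Finset.sum_range_succ, Finset.sum_range_succ, Finset.sum_range_zero]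
  norm_num

lemma part_coeff_zero (i : ℕ) (hi : 0 < i) :
    (Polynomial.C ((i.factorial : ℚ)⁻¹) * descPochhammer ℚ i).coeff 0 = 0 := by
  rw [Polynomial.mul_coeff_zero, Polynomial.coeff_zero_eq_eval_zero (descPochhammer ℚ i),
    descPochhammer_ne_zero_eval_zero (R := ℚ) (by omega : i ≠ 0), mul_zero]

lemma qpart_coeff_one_of_ne {n : ℕ} (hn : 1 ≤ n) (μ : n.Partition)
    (hμ : μ ≠ Nat.Partition.indiscrete n) : (qpart μ).coeff 1 = 0 := by
  have h0 : μ.parts ≠ 0 := by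
    intro h
    have hs := μ.parts_sum
    rw [h, Multiset.sum_zero] at hs
    omega
  obtain ⟨a, ha⟩ := Multiset.exists_mem_of_ne_zero h0
  obtain ⟨t, hat⟩ := Multiset.exists_cons_of_mem ha
  have ht : t ≠ 0 := by
    rintro rfl
    have hs := μ.parts_sum
    rw [hat, Multiset.sum_cons, Multiset.sum_zero, add_zero] at hs
    exact hμ (Nat.Partition.ext (by
      rw [hat, hs, Nat.Partition.indiscrete_parts (by omega)]; rfl))
  obtain ⟨b, hbm⟩ := Multiset.exists_mem_of_ne_zero ht
  obtain ⟨s, hbs⟩ := Multiset.exists_cons_of_mem hbm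
  have ha : 0 < a := μ.parts_pos (by rw [hat]; exact Multiset.mem_cons_self _ _)
  have hb : 0 < b := μ.parts_pos (by
    rw [hat, hbs]; exact Multiset.mem_cons_of_mem (Multiset.mem_cons_self _ _))
  rw [qpart, hat, hbs, Multiset.map_cons, Multiset.map_cons, Multiset.prod_cons,
    Multiset.prod_cons, mul_coeff_one', part_coeff_zero a ha, zero_mul,
    Polynomial.mul_coeff_zero, part_coeff_zero b hb, zero_mul, mul_zero, add_zero]

lemma qpart_coeff_one_indiscrete {n : ℕ} (hn : 1 ≤ n) :
    (qpart (Nat.Partition.indiscrete n)).coeff 1 = (-1)^(n-1) * (n : ℚ)⁻¹ := by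
  rw [qpart, Nat.Partition.indiscrete_parts (by omega), Multiset.map_singleton,
    Multiset.prod_singleton, Polynomial.coeff_C_mul, desc_coeff_one n hn]
  have hf := Nat.mul_factorial_pred (by omega : n ≠ 0)
  have : (n.factorial : ℚ) = n * (n-1).factorial := by exact_mod_cast hf.symm
  rw [this, mul_inv]
  have : ((n-1).factorial : ℚ) ≠ 0 := by exact_mod_cast Nat.factorial_ne_zero _
  field_simp

/-- evaluation point: first k variables 1, rest 0 -/
def x0 (n k : ℕ) : Fin n → ℚ := fun i => if (i : ℕ) < k then 1 else 0

lemma card_filter_lt (n k : ℕ) (hk : k ≤ n) :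
    ((univ : Finset (Fin n)).filter (fun i : Fin n => (i : ℕ) < k)).card = k := by
  rcases Nat.eq_or_lt_of_le hk with h | h
  · subst h
    rw [Finset.filter_true_of_mem (fun i _ => i.isLt), Finset.card_univ, Fintype.card_fin]
  · have : (univ : Finset (Fin n)).filter (fun i : Fin n => (i : ℕ) < k) = Finset.Iio ⟨k, h⟩ := by
      apply Finset.ext
      intro i
      simp [Fin.lt_def]
    rw [this, Fin.card_Iio]

lemma esymm_eval (n m k : ℕ) (hk : k ≤ n) :
    eval (x0 n k) (esymm (Fin n) ℚ m) = (k.choose m : ℚ) := by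
  set K := (univ : Finset (Fin n)).filter (fun i : Fin n => (i : ℕ) < k) with hK
  rw [esymm, map_sum]
  have h1 : ∀ t ∈ Finset.powersetCard m (univ : Finset (Fin n)),
      eval (x0 n k) (∏ i ∈ t, X i) = if t ⊆ K then 1 else 0 := by
    intro t _
    rw [eval_prod]
    by_cases h : t ⊆ K
    · rw [if_pos h]
      apply Finset.prod_eq_one
      intro i hi
      have : (i : ℕ) < k := (Finset.mem_filter.mp (h hi)).2
      simp [x0, this]
    · rw [if_neg h]
      obtain ⟨i, hit, hik⟩ := Finset.not_subset.mp h
      apply Finset.prod_eq_zero hit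
      have : ¬ (i : ℕ) < k := fun hc => hik (Finset.mem_filter.mpr ⟨Finset.mem_univ _, hc⟩)
      simp [x0, this]
  rw [Finset.sum_congr rfl h1, Finset.sum_boole]
  have h2 : Finset.filter (· ⊆ K) (Finset.powersetCard m (univ : Finset (Fin n))) =
      Finset.powersetCard m K := by
    ext t
    simp only [Finset.mem_filter, Finset.mem_powersetCard, Finset.subset_univ, true_and]
    tauto
  rw [h2, Finset.card_powersetCard, hK, card_filter_lt n k hk]

lemma esymmPart_eval (n k : ℕ) (hk : k ≤ n) (μ : n.Partition) :
    eval (x0 n k) (esymmPart (Fin n) ℚ μ) = (qpart μ).eval (k : ℚ) := by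
  rw [esymmPart, qpart_eval, map_multiset_prod, Multiset.map_map]
  congr 1
  apply Multiset.map_congr rfl
  intro i _
  exact esymm_eval n i k hk

lemma csf_eval {V : Type} [Fintype V] (n k : ℕ) (hk : k ≤ n) (G : SimpleGraph V) :
    eval (x0 n k) (csf n G) = (pc G k : ℚ) := by
  rw [csf, map_sum]
  have h1 : ∀ κ ∈ (univ : Finset (V → Fin n)).filter (fun κ => ∀ u v, G.Adj u v → κ u ≠ κ v),
      eval (x0 n k) (∏ v, X (κ v)) = if (∀ v, (κ v : ℕ) < k) then 1 else 0 := by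
    intro κ _
    rw [eval_prod]
    by_cases h : ∀ v, (κ v : ℕ) < k
    · rw [if_pos h]
      apply Finset.prod_eq_one
      intro v _
      simp [x0, h v]
    · rw [if_neg h]
      push_neg at h
      obtain ⟨v, hv⟩ := h
      apply Finset.prod_eq_zero (Finset.mem_univ v)
      simp [x0, hv]
  rw [Finset.sum_congr rfl h1, Finset.sum_boole, Finset.filter_filter]
  rw [pc]
  norm_cast
  refine Finset.card_bij' (fun (κ : V → Fin n) hκ v =>
      (⟨(κ v : ℕ), (Finset.mem_filter.mp hκ).2.2 v⟩ : Fin k))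
    (fun (κ' : V → Fin k) _ v => Fin.castLE hk (κ' v)) ?_ ?_ ?_ ?_
  · intro κ hκ
    simp only [Finset.mem_filter, Finset.mem_univ, true_and] at hκ ⊢
    intro a b hab hfe
    have hv : (κ a : ℕ) = (κ b : ℕ) := Fin.mk_eq_mk.mp hfe
    exact hκ.1 a b hab (Fin.ext hv)
  · intro κ' hκ'
    simp only [Finset.mem_filter, Finset.mem_univ, true_and] at hκ' ⊢
    refine ⟨?_, fun v => (κ' v).isLt⟩
    intro a b hab hfe
    have hv : (κ' a : ℕ) = (κ' b : ℕ) := congrArg Fin.val (Fin.castLE_injective hk hfe) ▸ rfl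
    exact hκ' a b hab (Fin.ext hv)
  · intro κ hκ
    funext v
    apply Fin.ext
    rfl
  · intro κ' hκ'
    funext v
    apply Fin.ext
    rfl

lemma pc_dc {W : Type} [Fintype W] (H : SimpleGraph W) (u v : W) (huv : H.Adj u v) (k : ℕ) :
    pc (H.deleteEdges {s(u, v)}) k = pc H k + pc (contract H u v) k := by
  classical
  have hne : u ≠ v := H.ne_of_adj huv
  rw [pc, ← Finset.card_filter_add_card_filter_not
    (p := fun κ => κ u = κ v), add_comm]
  congr 1
  -- second: κ u ≠ κ v part equals pc H k
  · rw [Finset.filter_filter, pc]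
    congr 1
    convert Finset.filter_congr ?_ using 1
    intro κ _
    constructor
    · rintro ⟨hdel, hne'⟩ a b hab
      by_cases hs : s(a, b) = s(u, v)
      · rcases Sym2.eq_iff.mp hs with ⟨rfl, rfl⟩ | ⟨rfl, rfl⟩
        · exact hne'
        · exact fun h => hne' h.symm
      · exact hdel a b (SimpleGraph.deleteEdges_adj.mpr ⟨hab, by simp [hs]⟩)
    · intro hp
      refine ⟨fun a b hab => hp a b (SimpleGraph.deleteEdges_adj.mp hab).1, hp u v huv⟩
  -- first: κ u = κ v part equals pc (contract H u v) k
  · rw [Finset.filter_filter, pc]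
    refine Finset.card_bij' (fun (κ : W → Fin k) _ (w : {w : W // w ≠ v}) => κ w)
      (fun (κ' : {w : W // w ≠ v} → Fin k) _ (w : W) =>
        if h : w = v then κ' ⟨u, hne⟩ else κ' ⟨w, h⟩) ?_ ?_ ?_ ?_
    · intro κ hκ
      simp only [Finset.mem_filter, Finset.mem_univ, true_and] at hκ ⊢
      obtain ⟨hdel, heq⟩ := hκ
      rintro a b ⟨hab, hcase⟩
      have hdel' : ∀ x y : W, H.Adj x y → s(x, y) ≠ s(u, v) → κ x ≠ κ y := by
        intro x y hxy hs
        exact hdel x y (SimpleGraph.deleteEdges_adj.mpr ⟨hxy, by simp [hs]⟩)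
      rcases hcase with h | ⟨h, h'⟩ | ⟨h, h'⟩
      · refine hdel' a b h ?_
        intro hs
        rcases Sym2.eq_iff.mp hs with ⟨_, hb⟩ | ⟨ha, _⟩
        · exact b.2 hb
        · exact a.2 ha
      · have hbu : (b : W) ≠ u := by
          intro hbu
          exact hab (Subtype.ext (h.trans hbu.symm))
        have : κ (v : W) ≠ κ b := by
          refine hdel' v b h' ?_
          intro hs
          rcases Sym2.eq_iff.mp hs with ⟨hvu, _⟩ | ⟨_, hbu'⟩
          · exact hne hvu.symm
          · exact hbu hbu'
        rw [show ((a : W)) = u from h, heq]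
        exact this
      · have hau : (a : W) ≠ u := by
          intro hau
          exact hab (Subtype.ext (hau.trans h.symm))
        have : κ (a : W) ≠ κ v := by
          refine hdel' a v h' ?_
          intro hs
          rcases Sym2.eq_iff.mp hs with ⟨hau', _⟩ | ⟨hav, _⟩
          · exact hau hau'
          · exact a.2 hav
        rw [show ((b : W)) = u from h, heq]
        exact fun hc => this hc
    · intro κ' hκ'
      simp only [Finset.mem_filter, Finset.mem_univ, true_and] at hκ' ⊢
      constructor
      · intro a b hab
        rw [SimpleGraph.deleteEdges_adj] at hab
        obtain ⟨hab, hs⟩ := hab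
        simp only [Set.mem_singleton_iff] at hs
        by_cases ha : a = v
        · have hbv : b ≠ v := by
            intro hc
            rw [ha, hc] at hab
            exact H.loopless.irrefl v hab
          have hbu : b ≠ u := fun hc => hs (by rw [ha, hc, Sym2.eq_swap])
          rw [dif_pos ha, dif_neg hbv]
          refine hκ' ⟨u, hne⟩ ⟨b, hbv⟩ ⟨?_, Or.inr (Or.inl ⟨rfl, ha ▸ hab⟩)⟩
          intro hc
          exact hbu (congrArg Subtype.val hc).symm
        · by_cases hb : b = v
          · have hau : a ≠ u := fun hc => hs (by rw [hb, hc])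
            rw [dif_neg ha, dif_pos hb]
            refine hκ' ⟨a, ha⟩ ⟨u, hne⟩ ⟨?_, Or.inr (Or.inr ⟨rfl, hb ▸ hab⟩)⟩
            intro hc
            exact hau (congrArg Subtype.val hc)
          · rw [dif_neg ha, dif_neg hb]
            refine hκ' ⟨a, ha⟩ ⟨b, hb⟩ ⟨?_, Or.inl hab⟩
            intro hc
            exact H.ne_of_adj hab (congrArg Subtype.val hc)
      · simp [hne]
    · intro κ hκ
      simp only [Finset.mem_filter, Finset.mem_univ, true_and] at hκ
      funext w
      by_cases h : w = v
      · simp only [h, dite_true, reduceDIte]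
        exact hκ.2
      · simp only [h, dite_false, dif_neg h]
    · intro κ' hκ'
      funext w
      simp only [dif_neg w.2]

lemma pc_no_edge {W : Type} [Fintype W] (H : SimpleGraph W) (h : ∀ a b : W, ¬ H.Adj a b)
    (k : ℕ) : pc H k = k ^ Fintype.card W := by
  rw [pc, Finset.filter_true_of_mem (fun κ _ => fun a b hab => absurd hab (h a b)),
    Finset.card_univ, Fintype.card_fun, Fintype.card_fin]

lemma pc_poly : ∀ (N : ℕ) (W : Type) [Fintype W] (H : SimpleGraph W),
    (Fintype.card W)^3 + H.edgeFinset.card ≤ N →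
    ∃ R : Polynomial ℚ, R.natDegree ≤ Fintype.card W ∧ ∀ k : ℕ, R.eval (k : ℚ) = pc H k := by
  intro N
  induction N with
  | zero =>
    intro W _ H hm
    have hc3 : Fintype.card W ^ 3 = 0 := by omega
    have hc : Fintype.card W = 0 := by
      exact pow_eq_zero_iff (by norm_num : (3 : ℕ) ≠ 0) |>.mp hc3
    have hW : IsEmpty W := Fintype.card_eq_zero_iff.mp hc
    refine ⟨1, by simp, fun k => ?_⟩
    rw [pc_no_edge H (fun a b _ => hW.elim a), hc, pow_zero, Polynomial.eval_one, Nat.cast_one]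
  | succ N ih =>
    intro W _ H hm
    by_cases hE : ∃ a b : W, H.Adj a b
    · obtain ⟨u, v, huv⟩ := hE
      have hne : u ≠ v := H.ne_of_adj huv
      have hcW : 2 ≤ Fintype.card W := by
        have h2 : ({u, v} : Finset W).card ≤ Fintype.card W := by
          rw [← Finset.card_univ]; exact Finset.card_le_card (Finset.subset_univ _)
        rwa [Finset.card_pair hne] at h2
      have hedge : s(u, v) ∈ H.edgeFinset := by
        rw [SimpleGraph.mem_edgeFinset]; exact huv
      have he1 : 1 ≤ H.edgeFinset.card := Finset.card_pos.mpr ⟨_, hedge⟩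
      -- deletion
      have hdel_edges : (H.deleteEdges {s(u, v)}).edgeFinset.card + 1 ≤ H.edgeFinset.card := by
        have hsub : (H.deleteEdges {s(u, v)}).edgeFinset ⊆ H.edgeFinset.erase s(u, v) := by
          intro e he
          rw [SimpleGraph.mem_edgeFinset, SimpleGraph.edgeSet_deleteEdges] at he
          rw [Finset.mem_erase, SimpleGraph.mem_edgeFinset]
          exact ⟨he.2, he.1⟩
        calc (H.deleteEdges {s(u, v)}).edgeFinset.card + 1
            ≤ (H.edgeFinset.erase s(u, v)).card + 1 :=
              Nat.add_le_add_right (Finset.card_le_card hsub) 1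
          _ = H.edgeFinset.card := by
              rw [Finset.card_erase_of_mem hedge]
              omega
      obtain ⟨Rd, hRd_deg, hRd⟩ := ih W (H.deleteEdges {s(u, v)}) (by
        convert (show Fintype.card W ^ 3 + (H.deleteEdges {s(u, v)}).edgeFinset.card ≤ N by omega))
      -- contraction
      have hcard' : Fintype.card {w : W // w ≠ v} = Fintype.card W - 1 := by
        have h1 : Fintype.card {w : W // ¬ (w = v)} = Fintype.card W - Fintype.card {w : W // w = v} :=
          Fintype.card_subtype_compl _
        rw [Fintype.card_subtype_eq] at h1
        exact h1
      have hcon_edges : (contract H u v).edgeFinset.card ≤ Fintype.card W * Fintype.card W := by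
        calc (contract H u v).edgeFinset.card ≤ Fintype.card (Sym2 {w : W // w ≠ v}) := by
              rw [← Finset.card_univ]; exact Finset.card_le_card (Finset.subset_univ _)
          _ = Nat.choose (Fintype.card {w : W // w ≠ v} + 1) 2 := Sym2.card
          _ = Nat.choose (Fintype.card W) 2 := by rw [hcard']; congr 1; omega
          _ ≤ Fintype.card W * Fintype.card W := by
              rw [Nat.choose_two_right]
              exact le_trans (Nat.div_le_self _ _)
                (Nat.mul_le_mul_left _ (Nat.sub_le _ _))
      have hkey : (Fintype.card W - 1)^3 + Fintype.card W * Fintype.card W + 1 ≤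
          Fintype.card W ^ 3 := by
        obtain ⟨m, hmeq⟩ := Nat.exists_eq_add_of_le hcW
        rw [hmeq]
        simp only [Nat.add_sub_cancel, show 2 + m - 1 = m + 1 by omega]
        nlinarith [sq_nonneg m, Nat.zero_le m]
      obtain ⟨Rc, hRc_deg, hRc⟩ := ih {w : W // w ≠ v} (contract H u v) (by
        rw [hcard']
        omega)
      refine ⟨Rd - Rc, ?_, fun k => ?_⟩
      · refine le_trans (Polynomial.natDegree_sub_le _ _) ?_
        rw [max_le_iff]
        exact ⟨hRd_deg, le_trans hRc_deg (by rw [hcard']; omega)⟩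
      · rw [Polynomial.eval_sub, hRd k, hRc k]
        have hdc := pc_dc H u v huv k
        have hdc' : (pc (H.deleteEdges {s(u, v)}) k : ℚ) =
            pc H k + pc (contract H u v) k := by exact_mod_cast congrArg Nat.cast hdc
        rw [hdc']
        ring
    · push_neg at hE
      refine ⟨Polynomial.X ^ Fintype.card W, by
        simp [Polynomial.natDegree_X_pow], fun k => ?_⟩
      rw [pc_no_edge H hE, Polynomial.eval_pow, Polynomial.eval_X]
      push_cast
      ring

lemma sum_qpart_eval {n : ℕ} (c : n.Partition → ℚ) (k : ℕ) :
    (∑ μ : n.Partition, c μ • qpart μ).eval (k : ℚ) =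
      ∑ μ : n.Partition, c μ * (qpart μ).eval (k : ℚ) := by
  rw [Polynomial.eval_finset_sum]
  apply Finset.sum_congr rfl
  intro μ _
  rw [Polynomial.eval_smul, smul_eq_mul]

lemma sum_qpart_natDegree {n : ℕ} (c : n.Partition → ℚ) :
    (∑ μ : n.Partition, c μ • qpart μ).natDegree ≤ n :=
  Polynomial.natDegree_sum_le_of_forall_le _ _
    (fun μ _ => le_trans (Polynomial.natDegree_smul_le _ _) (qpart_natDegree_le μ))

lemma sum_qpart_coeff_one {n : ℕ} (hn : 1 ≤ n) (c : n.Partition → ℚ) :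
    (∑ μ : n.Partition, c μ • qpart μ).coeff 1 =
      c (Nat.Partition.indiscrete n) * ((-1)^(n-1) * (n : ℚ)⁻¹) := by
  rw [Polynomial.finset_sum_coeff]
  rw [Finset.sum_eq_single (Nat.Partition.indiscrete n)]
  · rw [Polynomial.coeff_smul, qpart_coeff_one_indiscrete hn, smul_eq_mul]
  · intro μ _ hμ
    rw [Polynomial.coeff_smul, qpart_coeff_one_of_ne hn μ hμ, smul_zero]
  · intro h
    exact absurd (Finset.mem_univ _) h

lemma poly_eq_zero_of_eval (f : Polynomial ℚ) (n : ℕ) (hd : f.natDegree ≤ n)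
    (h : ∀ k : ℕ, k ≤ n → f.eval (k : ℚ) = 0) : f = 0 := by
  apply Polynomial.eq_zero_of_degree_lt_of_eval_finset_eq_zero
    ((Finset.range (n+1)).image (Nat.cast : ℕ → ℚ))
  · rw [Finset.card_image_of_injective _ Nat.cast_injective, Finset.card_range]
    refine lt_of_le_of_lt Polynomial.degree_le_natDegree ?_
    exact_mod_cast Nat.lt_succ_of_le hd
  · intro x hx
    obtain ⟨k, hk, rfl⟩ := Finset.mem_image.mp hx
    exact h k (Nat.lt_succ_iff.mp (Finset.mem_range.mp hk))

lemma expand_eval {V : Type} [Fintype V] (n : ℕ) (G : SimpleGraph V) (c : n.Partition → ℚ)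
    (hc : csf n G = ∑ μ : n.Partition, c μ • esymmPart (Fin n) ℚ μ) (k : ℕ) (hk : k ≤ n) :
    (∑ μ : n.Partition, c μ • qpart μ).eval (k : ℚ) = pc G k := by
  have h := congrArg (eval (x0 n k)) hc
  rw [csf_eval n k hk G, map_sum] at h
  rw [sum_qpart_eval, h]
  apply Finset.sum_congr rfl
  intro μ _
  rw [smul_eq_C_mul, eval_mul, eval_C, esymmPart_eval n k hk μ]

/-- For any simple graph `G` on `n` vertices and any edge `ε` of `G`,
`[e_{(n)}]X_G = [e_{(n)}]X_{G-ε} + (n/(n-1)) · [e_{(n-1)}]X_{G/ε}`. -/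
theorem csf_coeff_e_top_deletion_contraction {V : Type} [Fintype V] (n : ℕ)
    (hV : Fintype.card V = n) (G : SimpleGraph V) (u v : V) (huv : G.Adj u v)
    (c : n.Partition → ℚ)
    (hc : csf n G = ∑ μ : n.Partition, c μ • esymmPart (Fin n) ℚ μ)
    (c' : n.Partition → ℚ)
    (hc' : csf n (G.deleteEdges {s(u, v)}) = ∑ μ : n.Partition, c' μ • esymmPart (Fin n) ℚ μ)
    (c'' : (n - 1).Partition → ℚ)
    (hc'' : csf (n - 1) (contract G u v) =
      ∑ μ : (n - 1).Partition, c'' μ • esymmPart (Fin (n - 1)) ℚ μ) :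
    c (Nat.Partition.indiscrete n) = c' (Nat.Partition.indiscrete n) +
      ((n : ℚ) / ((n : ℚ) - 1)) * c'' (Nat.Partition.indiscrete (n - 1)) := by
  have hne : u ≠ v := G.ne_of_adj huv
  have hn2 : 2 ≤ n := by
    rw [← hV]
    have h2 : ({u, v} : Finset V).card ≤ Fintype.card V := by
      rw [← Finset.card_univ]; exact Finset.card_le_card (Finset.subset_univ _)
    rwa [Finset.card_pair hne] at h2
  have hcard' : Fintype.card {w : V // w ≠ v} = n - 1 := by
    have h1 : Fintype.card {w : V // ¬ (w = v)} =
        Fintype.card V - Fintype.card {w : V // w = v} := Fintype.card_subtype_compl _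
    rw [Fintype.card_subtype_eq, hV] at h1
    exact h1
  set P := ∑ μ : n.Partition, c μ • qpart μ with hP
  set P' := ∑ μ : n.Partition, c' μ • qpart μ with hP'
  set P'' := ∑ μ : (n-1).Partition, c'' μ • qpart μ with hP''
  -- the polynomial for the contracted graph
  obtain ⟨R, hRdeg, hReval⟩ := pc_poly (Fintype.card {w : V // w ≠ v} ^ 3 +
    (contract G u v).edgeFinset.card) {w : V // w ≠ v} (contract G u v) le_rfl
  -- R = P''
  have hRP : R = P'' := by
    rw [← sub_eq_zero]
    apply poly_eq_zero_of_eval _ (n - 1)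
    · refine le_trans (Polynomial.natDegree_sub_le _ _) ?_
      rw [max_le_iff]
      refine ⟨by rw [hcard'] at hRdeg; exact hRdeg, sum_qpart_natDegree c''⟩
    · intro k hk
      rw [Polynomial.eval_sub, hReval k,
        expand_eval (n-1) (contract G u v) c'' hc'' k hk, sub_self]
  have hPeval'' : ∀ k : ℕ, P''.eval (k : ℚ) = pc (contract G u v) k := fun k => by
    rw [← hRP, hReval]
  have hD : P' - P - P'' = 0 := by
    apply poly_eq_zero_of_eval _ n
    · refine le_trans (Polynomial.natDegree_sub_le _ _) ?_
      rw [max_le_iff]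
      refine ⟨le_trans (Polynomial.natDegree_sub_le _ _) ?_, le_trans (sum_qpart_natDegree c'') (by omega)⟩
      rw [max_le_iff]
      exact ⟨sum_qpart_natDegree c', sum_qpart_natDegree c⟩
    · intro k hk
      rw [Polynomial.eval_sub, Polynomial.eval_sub,
        expand_eval n (G.deleteEdges {s(u, v)}) c' hc' k hk,
        expand_eval n G c hc k hk, hPeval'' k]
      have hdc := pc_dc G u v huv k
      rw [hdc]
      push_cast
      ring
  have hco := congrArg (fun f => Polynomial.coeff f 1) hD
  simp only [Polynomial.coeff_sub, Polynomial.coeff_zero] at hco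
  rw [hP', hP, hP'', sum_qpart_coeff_one (by omega : 1 ≤ n) c',
    sum_qpart_coeff_one (by omega : 1 ≤ n) c,
    sum_qpart_coeff_one (by omega : 1 ≤ n - 1) c''] at hco
  set A := c (Nat.Partition.indiscrete n) with hA
  set B := c' (Nat.Partition.indiscrete n) with hB
  set Dd := c'' (Nat.Partition.indiscrete (n - 1)) with hDd
  have hexp : ((-1 : ℚ))^(n-1) = ((-1 : ℚ))^(n-1-1) * (-1) := by
    rw [← pow_succ]
    congr 1
    omega
  have hcast : ((n - 1 : ℕ) : ℚ) = (n : ℚ) - 1 := by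
    push_cast [Nat.cast_sub (by omega : 1 ≤ n)]
    ring
  rw [hexp, hcast] at hco
  have hn0 : (n : ℚ) ≠ 0 := by
    have : (2 : ℚ) ≤ (n : ℚ) := by exact_mod_cast hn2
    linarith
  have hn1 : (n : ℚ) - 1 ≠ 0 := by
    have : (2 : ℚ) ≤ (n : ℚ) := by exact_mod_cast hn2
    linarith
  rcases Nat.even_or_odd (n - 1 - 1) with hpar | hpar
  · rw [hpar.neg_one_pow] at hco
    field_simp at hco ⊢
    have h5 := mul_left_cancel₀ hn0 (show (n : ℚ) * ((A - B) * ((n : ℚ) - 1)) =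
      (n : ℚ) * ((n : ℚ) * Dd) by linear_combination (n : ℚ) * hco)
    linear_combination h5
  · rw [hpar.neg_one_pow] at hco
    field_simp at hco ⊢
    linear_combination (-1 : ℚ) * hco
end
end

section
/- Every connected simple graph on n ≥ 4 vertices that is not a tree admits a partition of its vertex set into two blocks, each of size at least 2, such that the graph restricted to each block is connected. -/
open MvPolynomial Finset
open scoped Classical

noncomputable section

namespace NTHelp
open SimpleGraph

variable {V : Type} {G : SimpleGraph V}

lemma induce_singleton_connected (G : SimpleGraph V) (v : V) :
    (G.induce {v}).Connected := by
  rw [connected_iff_exists_forall_reachable]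
  refine ⟨⟨v, rfl⟩, ?_⟩
  rintro ⟨w, hw⟩
  rcases hw with rfl
  rfl

lemma exists_adj_in {s : Finset V} (hs : (G.induce (↑s : Set V)).Connected)
    (h2 : 2 ≤ s.card) {v : V} (hv : v ∈ s) :
    ∃ u ∈ s, u ≠ v ∧ G.Adj v u := by
  obtain ⟨w, hw, hne⟩ := Finset.exists_mem_ne (s := s) (by omega) v
  have hr := hs.preconnected ⟨v, hv⟩ ⟨w, hw⟩
  obtain ⟨p⟩ := hr
  cases p with
  | nil => exact absurd rfl hne
  | cons h q =>
    rename_i b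
    have hadj : G.Adj v ↑b := h
    exact ⟨↑b, b.2, fun hb => G.irrefl (hb ▸ hadj), hadj⟩

end NTHelp

namespace NTHelp
open SimpleGraph

variable {V : Type} {G : SimpleGraph V}

lemma induce_image_support_connected {s : Set V} {u w : ↥s} (p : (G.induce s).Walk u w) :
    (G.induce (Subtype.val '' {a | a ∈ p.support})).Connected := by
  have h := (p.map (SimpleGraph.Embedding.induce s).toHom).connected_induce_support
  have hset : Subtype.val '' {a | a ∈ p.support}
      = {v | v ∈ (p.map (SimpleGraph.Embedding.induce s).toHom).support} := by
    ext y
    simp only [SimpleGraph.Walk.support_map, List.mem_map, Set.mem_image, Set.mem_setOf_eq]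
    constructor
    · rintro ⟨a, ha, rfl⟩; exact ⟨a, ha, rfl⟩
    · rintro ⟨a, ha, rfl⟩; exact ⟨a, ha, rfl⟩
  rw [hset]
  exact h

lemma insert_conn {a : Finset V} {u v : V}
    (ha : (G.induce (↑a : Set V)).Connected) (hu : u ∈ a) (hadj : G.Adj v u) :
    (G.induce (↑(insert v a) : Set V)).Connected := by
  rw [Finset.coe_insert, Set.insert_eq]
  exact G.connected_induce_union (induce_singleton_connected G v).preconnected ha.preconnected rfl hu hadj

lemma cycle_three (x : V) (c : G.Walk x x) (hcyc : c.IsCycle) (hlen : c.length = 3) :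
    ∃ y z : V, G.Adj x y ∧ G.Adj y z ∧ G.Adj z x ∧
      c.support.tail = [y, z, x] := by
  cases c with
  | nil => simp at hlen
  | cons h1 p =>
    cases p with
    | nil => simp at hlen
    | cons h2 q =>
      cases q with
      | nil => simp at hlen
      | cons h3 r =>
        cases r with
        | nil =>
          rename_i y z
          exact ⟨y, z, h1, h2, h3, by simp⟩
        | cons h4 r' => simp [SimpleGraph.Walk.length_cons] at hlen

lemma cycle_split (x : V) (c : G.Walk x x) (hcyc : c.IsCycle) (hlen : 4 ≤ c.length) :
    ∃ (v1 v2 v3 : V) (q : G.Walk v3 x), G.Adj v1 v2 ∧ v1 ≠ v2 ∧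
      c.support = x :: v1 :: v2 :: q.support ∧ v1 ∉ q.support ∧ v2 ∉ q.support := by
  cases c with
  | nil => simp at hlen
  | cons h1 p =>
    cases p with
    | nil => simp at hlen
    | cons h2 q =>
      cases q with
      | nil => simp [SimpleGraph.Walk.length_cons] at hlen
      | cons h3 r =>
        rename_i v1 v2 v3
        have hnd : (v1 :: v2 :: r.support).Nodup := by
          have := hcyc.support_nodup
          simpa using this
        simp only [List.nodup_cons] at hnd
        refine ⟨v1, v2, v3, r, h2, ?_, by simp, ?_, hnd.2.1⟩
        · intro hv; exact hnd.1 (by simp [hv])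
        · intro hv; exact hnd.1 (by simp [hv])

end NTHelp

namespace NTHelp
open SimpleGraph

variable {V : Type}

lemma end_mem_support_tail {u v : V} {G : SimpleGraph V} (p : G.Walk u v) (h : ¬p.Nil) :
    v ∈ p.support.tail := by
  cases p with
  | nil => simp at h
  | cons h q => simpa using q.end_mem_support

lemma main [Fintype V] (G : SimpleGraph V) (s : Finset V) :
    4 ≤ s.card → (G.induce (↑s : Set V)).Connected →
    (∃ (x : V) (c : G.Walk x x), c.IsCycle ∧ ∀ y ∈ c.support, y ∈ s) →
    ∃ a b : Finset V, a ∪ b = s ∧ Disjoint a b ∧ 2 ≤ a.card ∧ 2 ≤ b.card ∧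
      (G.induce (↑a : Set V)).Connected ∧ (G.induce (↑b : Set V)).Connected := by
  induction s using Finset.strongInduction with
  | _ s ih =>
  rintro hcard hconn ⟨x, c, hcyc, hsupp⟩
  have hx : x ∈ s := hsupp x c.start_mem_support
  have htl : c.support.tail.Nodup := hcyc.support_nodup
  by_cases hA : ∀ y ∈ s, y ∈ c.support
  · -- Case A : the cycle spans s
    have hlen4 : 4 ≤ c.length := by
      have hsub : s ⊆ c.support.tail.toFinset := by
        intro y hy
        have hy' := hA y hy
        rw [c.support_eq_cons] at hy'
        rcases List.mem_cons.mp hy' with rfl | h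
        · exact List.mem_toFinset.mpr (end_mem_support_tail c hcyc.not_nil)
        · exact List.mem_toFinset.mpr h
      have h1 : s.card ≤ c.support.tail.toFinset.card := Finset.card_le_card hsub
      have h2 : c.support.tail.toFinset.card ≤ c.support.tail.length := c.support.tail.toFinset_card_le
      have h3 : c.support.tail.length = c.length := by
        rw [List.length_tail, SimpleGraph.Walk.length_support]; omega
      omega
    obtain ⟨v1, v2, v3, q, hadj12, hne12, hsupeq, hv1q, hv2q⟩ := cycle_split x c hcyc hlen4
    have hv1s : v1 ∈ s := hsupp v1 (by rw [hsupeq]; simp)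
    have hv2s : v2 ∈ s := hsupp v2 (by rw [hsupeq]; simp)
    have hasub : ({v1, v2} : Finset V) ⊆ s := by
      intro y hy
      rcases Finset.mem_insert.mp hy with rfl | hy
      · exact hv1s
      · rw [Finset.mem_singleton] at hy; subst hy; exact hv2s
    have hbset : (↑(s \ ({v1, v2} : Finset V)) : Set V) = {y | y ∈ q.support} := by
      ext y
      simp only [Finset.coe_sdiff, Set.mem_diff, Finset.mem_coe, Finset.coe_insert,
        Finset.coe_singleton, Set.mem_insert_iff, Set.mem_singleton_iff, Set.mem_setOf_eq]
      constructor
      · rintro ⟨hys, hya⟩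
        have hy' := hA y hys
        rw [hsupeq] at hy'
        push_neg at hya
        simp only [List.mem_cons] at hy'
        rcases hy' with rfl | rfl | rfl | h
        · exact q.end_mem_support
        · exact absurd rfl hya.1
        · exact absurd rfl hya.2
        · exact h
      · intro hyq
        refine ⟨hsupp y (by rw [hsupeq]; simp [hyq]), ?_⟩
        rintro (rfl | rfl)
        · exact hv1q hyq
        · exact hv2q hyq
    refine ⟨{v1, v2}, s \ {v1, v2}, Finset.union_sdiff_of_subset hasub,
      Finset.disjoint_sdiff, ?_, ?_, ?_, ?_⟩
    · rw [Finset.card_pair hne12]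
    · rw [Finset.card_sdiff_of_subset hasub, Finset.card_pair hne12]; omega
    · have : (↑({v1, v2} : Finset V) : Set V) = {v1, v2} := by simp
      rw [this]
      exact G.induce_pair_connected_of_adj hadj12
    · rw [hbset]
      exact q.connected_induce_support
  · -- Case B : some vertex outside the cycle
    push_neg at hA
    obtain ⟨w0, hw0s, hw0C⟩ := hA
    classical
    set D := s.filter (fun y => y ∉ c.support) with hD
    have hDne : D.Nonempty := ⟨w0, by simp [hD, hw0s, hw0C]⟩
    set f : V → ℕ :=
      fun y => if h : y ∈ s then (G.induce (↑s : Set V)).dist ⟨x, hx⟩ ⟨y, h⟩ else 0 with hf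
    obtain ⟨v, hvD, hmax⟩ := D.exists_max_image f hDne
    have hvs : v ∈ s := (Finset.mem_filter.mp hvD).1
    have hvC : v ∉ c.support := by
      have := (Finset.mem_filter.mp hvD).2
      simpa using this
    have hvx : v ≠ x := fun h => hvC (by rw [h]; exact c.start_mem_support)
    obtain ⟨u, hus, huv, hadj⟩ := exists_adj_in hconn (by omega) hvs
    by_cases h4 : s.card = 4
    · -- exactly 4 vertices : the cycle is a triangle on s.erase v
      have hsub : c.support.tail.toFinset ⊆ s.erase v := by
        intro y hy
        simp only [List.mem_toFinset] at hy
        have hyS : y ∈ c.support := List.mem_of_mem_tail hy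
        exact Finset.mem_erase.mpr ⟨fun h => hvC (h ▸ hyS), hsupp y hyS⟩
      have hcard3 : (s.erase v).card = 3 := by rw [Finset.card_erase_of_mem hvs]; omega
      have hlen : c.length = 3 := by
        have h1 := Finset.card_le_card hsub
        rw [List.toFinset_card_of_nodup htl] at h1
        have h2 : c.support.tail.length = c.length := by
          rw [List.length_tail, SimpleGraph.Walk.length_support]; omega
        have h3 := hcyc.three_le_length
        omega
      obtain ⟨y, z, ha1, ha2, ha3, htleq⟩ := cycle_three x c hcyc hlen
      have hndyzx : y ≠ z ∧ y ≠ x ∧ z ≠ x := by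
        rw [htleq] at htl
        simp only [List.nodup_cons, List.mem_cons, List.mem_singleton,
          List.not_mem_nil, or_false, not_or] at htl
        exact ⟨htl.1.1, htl.1.2, htl.2.1⟩
      have htfin : c.support.tail.toFinset = ({y, z, x} : Finset V) := by
        rw [htleq]; simp
      have herase : s.erase v = ({y, z, x} : Finset V) := by
        rw [← htfin]
        refine (Finset.eq_of_subset_of_card_le hsub ?_).symm
        rw [htfin]
        have : ({y, z, x} : Finset V).card = 3 := by
          rw [Finset.card_insert_of_notMem (by simp [hndyzx.1, hndyzx.2.1]),
            Finset.card_insert_of_notMem (by simp [hndyzx.2.2])]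
          simp
        omega
      have hvnotin : v ∉ ({y, z, x} : Finset V) := by
        rw [← herase]; exact Finset.notMem_erase v s
      have hs4 : s = insert v ({y, z, x} : Finset V) := by
        rw [← herase, Finset.insert_erase hvs]
      have humem : u ∈ ({y, z, x} : Finset V) := by
        rw [← herase]; exact Finset.mem_erase.mpr ⟨huv, hus⟩
      -- pick the two remaining triangle vertices
      have key : ∃ p1 p2 : V, G.Adj p1 p2 ∧ p1 ≠ p2 ∧
          s \ ({v, u} : Finset V) = ({p1, p2} : Finset V) := by
        simp only [Finset.mem_insert, Finset.mem_singleton] at humem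
        have hvy : v ≠ y := fun h => hvnotin (by simp [h])
        have hvz : v ≠ z := fun h => hvnotin (by simp [h])
        have hvx2 : v ≠ x := hvx
        obtain ⟨hyz, hyx, hzx⟩ := hndyzx
        rcases humem with rfl | rfl | rfl
        · refine ⟨z, x, ha3, hzx, ?_⟩
          rw [hs4]; ext t
          simp only [Finset.mem_sdiff, Finset.mem_insert, Finset.mem_singleton]
          constructor
          · rintro ⟨(rfl | rfl | rfl | rfl), ht⟩ <;> tauto
          · rintro (rfl | rfl) <;>
              exact ⟨by tauto, by push_neg; exact ⟨by tauto, by tauto⟩⟩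
        · refine ⟨y, x, ha1.symm, hyx, ?_⟩
          rw [hs4]; ext t
          simp only [Finset.mem_sdiff, Finset.mem_insert, Finset.mem_singleton]
          constructor
          · rintro ⟨(rfl | rfl | rfl | rfl), ht⟩ <;> tauto
          · rintro (rfl | rfl) <;>
              exact ⟨by tauto, by push_neg; exact ⟨by tauto, by tauto⟩⟩
        · refine ⟨y, z, ha2, hyz, ?_⟩
          rw [hs4]; ext t
          simp only [Finset.mem_sdiff, Finset.mem_insert, Finset.mem_singleton]
          constructor
          · rintro ⟨(rfl | rfl | rfl | rfl), ht⟩ <;> tauto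
          · rintro (rfl | rfl) <;>
              exact ⟨by tauto, by push_neg; exact ⟨by tauto, by tauto⟩⟩
      obtain ⟨p1, p2, hp12, hpne, hbeq⟩ := key
      have hasub : ({v, u} : Finset V) ⊆ s := by
        intro t ht
        rcases Finset.mem_insert.mp ht with rfl | ht
        · exact hvs
        · rw [Finset.mem_singleton] at ht; subst ht; exact hus
      refine ⟨{v, u}, s \ {v, u}, Finset.union_sdiff_of_subset hasub,
        Finset.disjoint_sdiff, ?_, ?_, ?_, ?_⟩
      · rw [Finset.card_pair hadj.ne]
      · rw [hbeq, Finset.card_pair hpne]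
      · have : (↑({v, u} : Finset V) : Set V) = {v, u} := by simp
        rw [this]; exact G.induce_pair_connected_of_adj hadj
      · rw [hbeq]
        have : (↑({p1, p2} : Finset V) : Set V) = {p1, p2} := by simp
        rw [this]; exact G.induce_pair_connected_of_adj hp12
    · -- at least 5 vertices : remove the farthest vertex v and use induction
      have hxe : x ∈ s.erase v := Finset.mem_erase.mpr ⟨Ne.symm hvx, hx⟩
      have conn' : (G.induce (↑(s.erase v) : Set V)).Connected := by
        apply G.induce_connected_of_patches x (Finset.mem_coe.mpr hxe)
        intro y hy
        have hy' := Finset.mem_erase.mp (Finset.mem_coe.mp hy)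
        have hyv : y ≠ v := hy'.1
        have hys : y ∈ s := hy'.2
        by_cases hyC : y ∈ c.support
        · refine ⟨{z | z ∈ c.support}, ?_, c.start_mem_support, hyC,
            (c.connected_induce_support).preconnected _ _⟩
          intro z hz
          exact Finset.mem_coe.mpr
            (Finset.mem_erase.mpr ⟨fun h => hvC (h ▸ hz), hsupp z hz⟩)
        · have hyD : y ∈ D := Finset.mem_filter.mpr ⟨hys, by simpa using hyC⟩
          obtain ⟨p, hp⟩ := hconn.exists_walk_length_eq_dist ⟨x, hx⟩ ⟨y, hys⟩
          have hvp : (⟨v, hvs⟩ : ↥(↑s : Set V)) ∉ p.support := by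
            intro hmem
            have ht1 := SimpleGraph.dist_le (p.takeUntil _ hmem)
            have ht2 := SimpleGraph.dist_le (p.dropUntil _ hmem)
            have ht3 : (p.takeUntil _ hmem).length + (p.dropUntil _ hmem).length
                = p.length := by
              rw [← SimpleGraph.Walk.length_append, p.take_spec hmem]
            have hmax' : (G.induce (↑s : Set V)).dist ⟨x, hx⟩ ⟨y, hys⟩ ≤
                (G.induce (↑s : Set V)).dist ⟨x, hx⟩ ⟨v, hvs⟩ := by
              have h := hmax y hyD
              rw [hf] at h
              simp only [dif_pos hys, dif_pos hvs] at h
              exact h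
            have hd0 : (G.induce (↑s : Set V)).dist ⟨v, hvs⟩ ⟨y, hys⟩ = 0 := by omega
            have hreach : (G.induce (↑s : Set V)).Reachable ⟨v, hvs⟩ ⟨y, hys⟩ :=
              ⟨p.dropUntil _ hmem⟩
            have := (hreach.dist_eq_zero_iff).mp hd0
            exact hyv (congrArg Subtype.val this).symm
          refine ⟨Subtype.val '' {a | a ∈ p.support}, ?_,
            ⟨⟨x, hx⟩, p.start_mem_support, rfl⟩, ⟨⟨y, hys⟩, p.end_mem_support, rfl⟩,
            (induce_image_support_connected p).preconnected _ _⟩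
          rintro z ⟨⟨z', hzs⟩, hz'sup, rfl⟩
          refine Finset.mem_coe.mpr (Finset.mem_erase.mpr ⟨?_, hzs⟩)
          intro hzv
          subst hzv
          exact hvp hz'sup
      have hcard' : 4 ≤ (s.erase v).card := by
        rw [Finset.card_erase_of_mem hvs]; omega
      obtain ⟨a, b, hab, hd, ha2, hb2, hac, hbc⟩ :=
        ih (s.erase v) (Finset.erase_ssubset hvs) hcard' conn'
          ⟨x, c, hcyc, fun y hy =>
            Finset.mem_erase.mpr ⟨fun h => hvC (h ▸ hy), hsupp y hy⟩⟩
      have humem : u ∈ a ∪ b := by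
        rw [hab]; exact Finset.mem_erase.mpr ⟨huv, hus⟩
      rcases Finset.mem_union.mp humem with hu | hu
      · refine ⟨insert v a, b, ?_, ?_, ?_, hb2, insert_conn hac hu hadj, hbc⟩
        · rw [Finset.insert_union, hab, Finset.insert_erase hvs]
        · refine Finset.disjoint_insert_left.mpr ⟨?_, hd⟩
          intro hvb
          have : v ∈ s.erase v := hab ▸ Finset.mem_union_right a hvb
          simp at this
        · have := Finset.card_le_card (Finset.subset_insert v a); omega
      · refine ⟨a, insert v b, ?_, ?_, ha2, ?_, hac, insert_conn hbc hu hadj⟩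
        · rw [Finset.union_insert, hab, Finset.insert_erase hvs]
        · refine Finset.disjoint_insert_right.mpr ⟨?_, hd⟩
          intro hvb
          have : v ∈ s.erase v := hab ▸ Finset.mem_union_left b hvb
          simp at this
        · have := Finset.card_le_card (Finset.subset_insert v b); omega

end NTHelp

/-- Every connected simple graph on `n ≥ 4` vertices that is not a tree admits a partition
of its vertex set into two blocks, each of size at least `2`, such that the graph
restricted to each block is connected. -/
theorem nonTree_connected_partition_two_blocks {V : Type} [Fintype V] (n : ℕ)
    (hV : Fintype.card V = n) (hn : 4 ≤ n) (G : SimpleGraph V) (hconn : G.Connected)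
    (hG : ¬ G.IsTree) :
    ∃ s : Set V, 2 ≤ Nat.card s ∧ 2 ≤ Nat.card ↥(sᶜ) ∧
      (G.induce s).Connected ∧ (G.induce sᶜ).Connected := by
  classical
  have hconn' : (G.induce (↑(Finset.univ : Finset V) : Set V)).Connected := by
    rw [Finset.coe_univ]
    exact ((SimpleGraph.induceUnivIso G).connected_iff).mpr hconn
  have hacyc : ¬ G.IsAcyclic := fun h => hG ⟨hconn, h⟩
  obtain ⟨x, c, hcyc⟩ : ∃ (x : V) (c : G.Walk x x), c.IsCycle := by
    simp only [SimpleGraph.IsAcyclic] at hacyc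
    push_neg at hacyc
    exact hacyc
  obtain ⟨a, b, hab, hd, ha2, hb2, hac2, hbc2⟩ :=
    NTHelp.main G Finset.univ (by rw [Finset.card_univ, hV]; omega) hconn'
      ⟨x, c, hcyc, fun y _ => Finset.mem_univ y⟩
  have hcompl : (↑a : Set V)ᶜ = ↑b := by
    ext y
    simp only [Set.mem_compl_iff, Finset.mem_coe]
    constructor
    · intro hy
      have hy2 : y ∈ a ∪ b := by rw [hab]; exact Finset.mem_univ y
      rcases Finset.mem_union.mp hy2 with h | h
      · exact absurd h hy
      · exact h
    · intro hy hya
      exact (Finset.disjoint_left.mp hd) hya hy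
  refine ⟨↑a, ?_, ?_, hac2, ?_⟩
  · rw [Nat.card_coe_set_eq, Set.ncard_coe_finset]; exact ha2
  · rw [hcompl, Nat.card_coe_set_eq, Set.ncard_coe_finset]; exact hb2
  · rw [hcompl]; exact hbc2
end
end

section
/- Let G be the unit interval graph on [n] determined by a weakly increasing sequence m = (m_1,...,m_{n-1}) with i ≤ m_i ≤ n. Then the number of acyclic orientations of G equals Π_{i=1}^{n-1} (m_i - i + 1). -/
open MvPolynomial Finset
open scoped Classical

noncomputable section

/-- The unit interval graph on vertices `{1, ..., n}` (encoded as `Fin n`, vertex `v`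
corresponding to the number `v + 1`) determined by a sequence `m`: vertices `a` and `b`
are adjacent iff `a ≠ b` and `a, b ∈ [i, m i]` for some `i ∈ {1, ..., n-1}`. -/
def uig (n : ℕ) (m : ℕ → ℕ) : SimpleGraph (Fin n) where
  Adj a b := a ≠ b ∧ ∃ i ∈ Finset.Icc 1 (n - 1),
    (i ≤ (a : ℕ) + 1 ∧ (a : ℕ) + 1 ≤ m i) ∧ (i ≤ (b : ℕ) + 1 ∧ (b : ℕ) + 1 ≤ m i)
  symm := ⟨by
    rintro a b ⟨h1, i, hi, ha, hb⟩
    exact ⟨h1.symm, i, hi, hb, ha⟩⟩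
  loopless := ⟨fun a h => h.1 rfl⟩

section AuxAO

lemma acyclicOrientationCount_subsingleton {V : Type} [Subsingleton V]
    (G : SimpleGraph V) : acyclicOrientationCount G = 1 := by
  rw [acyclicOrientationCount, Nat.card_eq_one_iff_unique]
  have h : ∀ (t : V → V → Prop), IsAcyclicOrientation G t → ∀ x y, ¬ t x y := by
    intro t ht x y hxy
    exact G.irrefl (Subsingleton.elim x y ▸ ht.1 x y hxy)
  constructor
  · constructor
    rintro ⟨r, hr⟩ ⟨s, hs⟩
    refine Subtype.ext (funext fun x => funext fun y => ?_)
    exact propext (iff_of_false (h r hr x y) (h s hs x y))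
  · refine ⟨⟨fun _ _ => False, fun u v hf => hf.elim,
      fun u v hadj => absurd (Subsingleton.elim u v) hadj.ne, fun v hv => ?_⟩⟩
    cases hv with
    | single h => exact h
    | tail _ h => exact h

lemma isAcyclicOrientation_map {V W : Type} (e : V ≃ W) (G : SimpleGraph V) (H : SimpleGraph W)
    (hGH : ∀ x y, G.Adj x y ↔ H.Adj (e x) (e y)) (r : V → V → Prop)
    (hr : IsAcyclicOrientation G r) :
    IsAcyclicOrientation H (fun x y => r (e.symm x) (e.symm y)) := by
  obtain ⟨h1, h2, h3⟩ := hr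
  refine ⟨fun u v h => ?_, fun u v h => h2 _ _ ?_, fun v hv => ?_⟩
  · have := h1 _ _ h
    rw [hGH] at this
    simpa using this
  · rw [hGH]
    simpa using h
  · exact h3 (e.symm v) (Relation.TransGen.lift (r := fun x y => r (e.symm x) (e.symm y)) (p := r) e.symm (fun a b h => h) v v hv)

lemma acyclicOrientationCount_congr {V W : Type} (e : V ≃ W) (G : SimpleGraph V)
    (H : SimpleGraph W) (hGH : ∀ x y, G.Adj x y ↔ H.Adj (e x) (e y)) :
    acyclicOrientationCount G = acyclicOrientationCount H := by
  have hHG : ∀ x y, H.Adj x y ↔ G.Adj (e.symm x) (e.symm y) := by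
    intro x y
    rw [hGH]
    simp
  refine Nat.card_congr ⟨fun r => ⟨fun x y => r.1 (e.symm x) (e.symm y),
      isAcyclicOrientation_map e G H hGH r.1 r.2⟩,
    fun s => ⟨fun x y => s.1 (e x) (e y), ?_⟩, fun r => ?_, fun s => ?_⟩
  · have := isAcyclicOrientation_map e.symm H G hHG s.1 s.2
    simpa using this
  · apply Subtype.ext; funext x y; simp
  · apply Subtype.ext; funext x y; simp

end AuxAO

set_option linter.unusedSectionVars false
set_option linter.unusedVariables false
section PosIn

variable {V : Type} [Fintype V]

def posInN (N : Finset V) (q : V → V → Prop) (u : V) : ℕ :=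
  (N.filter fun w => q w u).card

variable {N : Finset V} {q : V → V → Prop}

lemma posInN_lt_of_q (hirr : ∀ x, ¬ q x x)
    (htrans : ∀ u ∈ N, ∀ v ∈ N, ∀ w ∈ N, q u v → q v w → q u w)
    {u w : V} (hu : u ∈ N) (hw : w ∈ N) (hq : q u w) :
    posInN N q u < posInN N q w := by
  have hsub : insert u (N.filter fun x => q x u) ⊆ N.filter fun x => q x w := by
    intro x hx
    rcases Finset.mem_insert.mp hx with rfl | hx
    · exact Finset.mem_filter.mpr ⟨hu, hq⟩
    · obtain ⟨hxN, hxu⟩ := Finset.mem_filter.mp hx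
      exact Finset.mem_filter.mpr ⟨hxN, htrans x hxN u hu w hw hxu hq⟩
  have hnm : u ∉ N.filter fun x => q x u := fun h =>
    hirr u (Finset.mem_filter.mp h).2
  have h := Finset.card_le_card hsub
  rw [Finset.card_insert_of_notMem hnm] at h
  exact h

lemma q_of_posInN_lt (hirr : ∀ x, ¬ q x x)
    (htrans : ∀ u ∈ N, ∀ v ∈ N, ∀ w ∈ N, q u v → q v w → q u w)
    (htot : ∀ u ∈ N, ∀ w ∈ N, u ≠ w → q u w ∨ q w u)
    {u w : V} (hu : u ∈ N) (hw : w ∈ N) (h : posInN N q u < posInN N q w) :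
    q u w := by
  rcases eq_or_ne u w with rfl | hne
  · omega
  rcases htot u hu w hw hne with h' | h'
  · exact h'
  · exact absurd (posInN_lt_of_q hirr htrans hw hu h') (by omega)

lemma posInN_lt_card (hirr : ∀ x, ¬ q x x) {u : V} (hu : u ∈ N) :
    posInN N q u < N.card := by
  have hsub : insert u (N.filter fun x => q x u) ⊆ N := by
    intro x hx
    rcases Finset.mem_insert.mp hx with rfl | hx
    · exact hu
    · exact (Finset.mem_filter.mp hx).1
  have hnm : u ∉ N.filter fun x => q x u := fun h =>
    hirr u (Finset.mem_filter.mp h).2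
  have h := Finset.card_le_card hsub
  rw [Finset.card_insert_of_notMem hnm] at h
  exact h

lemma mem_downset_iff (hirr : ∀ x, ¬ q x x)
    (htrans : ∀ u ∈ N, ∀ v ∈ N, ∀ w ∈ N, q u v → q v w → q u w)
    (htot : ∀ u ∈ N, ∀ w ∈ N, u ≠ w → q u w ∨ q w u)
    {T : Finset V} (hTN : T ⊆ N)
    (hdown : ∀ w ∈ T, ∀ u ∈ N, q u w → u ∈ T) {u : V} (hu : u ∈ N) :
    u ∈ T ↔ posInN N q u < T.card := by
  constructor
  · intro huT
    have hsub : insert u (N.filter fun x => q x u) ⊆ T := by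
      intro x hx
      rcases Finset.mem_insert.mp hx with rfl | hx
      · exact huT
      · obtain ⟨hxN, hxu⟩ := Finset.mem_filter.mp hx
        exact hdown u huT x hxN hxu
    have hnm : u ∉ N.filter fun x => q x u := fun h =>
      hirr u (Finset.mem_filter.mp h).2
    have h := Finset.card_le_card hsub
    rw [Finset.card_insert_of_notMem hnm] at h
    exact h
  · intro h
    by_contra huT
    have hsub : T ⊆ N.filter fun x => q x u := by
      intro w hwT
      have hwN : w ∈ N := hTN hwT
      have hne : w ≠ u := fun hh => huT (hh ▸ hwT)
      refine Finset.mem_filter.mpr ⟨hwN, ?_⟩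
      rcases htot w hwN u hu hne with h' | h'
      · exact h'
      · exact absurd (hdown w hwT u hu h') huT
    have := Finset.card_le_card hsub
    have hle : T.card ≤ posInN N q u := this
    omega

lemma card_filter_posInN_lt (hirr : ∀ x, ¬ q x x)
    (htrans : ∀ u ∈ N, ∀ v ∈ N, ∀ w ∈ N, q u v → q v w → q u w)
    (htot : ∀ u ∈ N, ∀ w ∈ N, u ≠ w → q u w ∨ q w u)
    {k : ℕ} (hk : k ≤ N.card) :
    (N.filter fun u => posInN N q u < k).card = k := by
  have hinj : Set.InjOn (posInN N q) N := by
    intro u hu w hw h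
    by_contra hne
    rcases htot u hu w hw hne with h' | h'
    · have := posInN_lt_of_q hirr htrans hu hw h'
      omega
    · have := posInN_lt_of_q hirr htrans hw hu h'
      omega
  have himg : N.image (posInN N q) = Finset.range N.card := by
    apply Finset.eq_of_subset_of_card_le
    · intro j hj
      obtain ⟨u, hu, rfl⟩ := Finset.mem_image.mp hj
      exact Finset.mem_range.mpr (posInN_lt_card hirr hu)
    · rw [Finset.card_range, Finset.card_image_of_injOn hinj]
  have h1 : (N.filter fun u => posInN N q u < k).image (posInN N q) =
      (N.image (posInN N q)).filter fun j => j < k := by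
    ext j
    simp only [Finset.mem_image, Finset.mem_filter]
    constructor
    · rintro ⟨u, hu, rfl⟩
      exact ⟨⟨u, hu.1, rfl⟩, hu.2⟩
    · rintro ⟨⟨u, huN, rfl⟩, hlt⟩
      exact ⟨u, ⟨huN, hlt⟩, rfl⟩
  have h2 : ((Finset.range N.card).filter fun j => j < k) = Finset.range k := by
    ext j
    simp only [Finset.mem_filter, Finset.mem_range]
    omega
  calc (N.filter fun u => posInN N q u < k).card
      = ((N.filter fun u => posInN N q u < k).image (posInN N q)).card :=
        (Finset.card_image_of_injOn (hinj.mono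
          (Finset.coe_subset.mpr (Finset.filter_subset _ _)))).symm
    _ = ((N.image (posInN N q)).filter fun j => j < k).card := by rw [h1]
    _ = k := by rw [himg, h2, Finset.card_range]

end PosIn

section LiftQ

variable {V : Type} [Fintype V]

def liftq (v₀ : V) (r' : {u : V // u ≠ v₀} → {u : V // u ≠ v₀} → Prop) :
    V → V → Prop :=
  fun x y => ∃ (hx : x ≠ v₀) (hy : y ≠ v₀), r' ⟨x, hx⟩ ⟨y, hy⟩

def extRel (v₀ : V) (N : Finset V) (q : V → V → Prop) (k : ℕ) : V → V → Prop :=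
  fun x y =>
    if y = v₀ then x ∈ N ∧ posInN N q x < k
    else if x = v₀ then y ∈ N ∧ k ≤ posInN N q y
    else q x y

lemma transGen_liftq {v₀ : V} {r' : {u : V // u ≠ v₀} → {u : V // u ≠ v₀} → Prop}
    {x y : V} (h : Relation.TransGen (liftq v₀ r') x y) :
    ∃ (hx : x ≠ v₀) (hy : y ≠ v₀), Relation.TransGen r' ⟨x, hx⟩ ⟨y, hy⟩ := by
  induction h with
  | single h =>
    obtain ⟨hx, hy, h⟩ := h
    exact ⟨hx, hy, Relation.TransGen.single h⟩
  | tail _ h ih =>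
    obtain ⟨hb, hc, h⟩ := h
    obtain ⟨hx, hb', ih⟩ := ih
    exact ⟨hx, hc, ih.tail h⟩

end LiftQ

section Core

variable {V : Type} [Fintype V]

lemma acyclicOrientationCount_simplicial (G : SimpleGraph V) (v₀ : V)
    (hcl : ∀ u w, G.Adj v₀ u → G.Adj v₀ w → u ≠ w → G.Adj u w) :
    acyclicOrientationCount G =
      ((univ.filter fun u => G.Adj v₀ u).card + 1) *
        acyclicOrientationCount
          (SimpleGraph.comap (Subtype.val : {u : V // u ≠ v₀} → V) G) := by
  classical
  set N : Finset V := univ.filter fun u => G.Adj v₀ u with hNdef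
  have hmemN : ∀ u, u ∈ N ↔ G.Adj v₀ u := by intro u; simp [hNdef]
  have hv₀N : v₀ ∉ N := fun h => G.irrefl ((hmemN v₀).mp h)
  set H := SimpleGraph.comap (Subtype.val : {u : V // u ≠ v₀} → V) G with hHdef
  -- restriction of an AO is an AO
  have restr : ∀ r : V → V → Prop, IsAcyclicOrientation G r →
      IsAcyclicOrientation H (fun x y => r x.1 y.1) := by
    intro r hr
    refine ⟨fun u v h => hr.1 _ _ h, fun u v h => hr.2.1 _ _ h, fun v hv => ?_⟩
    exact hr.2.2 v.1 (Relation.TransGen.lift (r := fun x y => r x.1 y.1) (p := r) Subtype.val (fun a b h => h) v v hv)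
  -- lifted relation properties
  have hq_adj : ∀ (r' : {u : V // u ≠ v₀} → {u : V // u ≠ v₀} → Prop),
      IsAcyclicOrientation H r' → ∀ x y, liftq v₀ r' x y → G.Adj x y := by
    rintro r' hr' x y ⟨hx, hy, h⟩
    exact hr'.1 _ _ h
  have hq_acyc : ∀ (r' : {u : V // u ≠ v₀} → {u : V // u ≠ v₀} → Prop),
      IsAcyclicOrientation H r' → ∀ x, ¬ Relation.TransGen (liftq v₀ r') x x := by
    intro r' hr' x hx
    obtain ⟨h1, h2, h3⟩ := transGen_liftq hx
    exact hr'.2.2 _ h3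
  have hq_asym : ∀ (r' : {u : V // u ≠ v₀} → {u : V // u ≠ v₀} → Prop),
      IsAcyclicOrientation H r' → ∀ x y, liftq v₀ r' x y → ¬ liftq v₀ r' y x := by
    intro r' hr' x y hxy hyx
    exact hq_acyc r' hr' x ((Relation.TransGen.single hxy).tail hyx)
  have hq_tot : ∀ (r' : {u : V // u ≠ v₀} → {u : V // u ≠ v₀} → Prop),
      IsAcyclicOrientation H r' → ∀ u ∈ N, ∀ w ∈ N, u ≠ w →
        liftq v₀ r' u w ∨ liftq v₀ r' w u := by
    intro r' hr' u hu w hw hne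
    have hadj : G.Adj u w := hcl u w ((hmemN u).mp hu) ((hmemN w).mp hw) hne
    have hu0 : u ≠ v₀ := fun h => hv₀N (h ▸ hu)
    have hw0 : w ≠ v₀ := fun h => hv₀N (h ▸ hw)
    have hH : H.Adj ⟨u, hu0⟩ ⟨w, hw0⟩ := hadj
    by_cases h : r' ⟨u, hu0⟩ ⟨w, hw0⟩
    · exact Or.inl ⟨hu0, hw0, h⟩
    · exact Or.inr ⟨hw0, hu0, (hr'.2.1 _ _ hH.symm).mpr h⟩
  have hq_trans : ∀ (r' : {u : V // u ≠ v₀} → {u : V // u ≠ v₀} → Prop),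
      IsAcyclicOrientation H r' → ∀ u ∈ N, ∀ v ∈ N, ∀ w ∈ N,
        liftq v₀ r' u v → liftq v₀ r' v w → liftq v₀ r' u w := by
    intro r' hr' u hu v hv w hw huv hvw
    rcases eq_or_ne u w with rfl | hne
    · exact absurd hvw (hq_asym r' hr' u v huv)
    rcases hq_tot r' hr' u hu w hw hne with h | h
    · exact h
    · exact absurd (((Relation.TransGen.single h).tail huv).tail hvw)
        (hq_acyc r' hr' w)
  -- extension of an AO is an AO
  have ext_AO : ∀ (r' : {u : V // u ≠ v₀} → {u : V // u ≠ v₀} → Prop),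
      IsAcyclicOrientation H r' → ∀ k : ℕ, k ≤ N.card →
      IsAcyclicOrientation G (extRel v₀ N (liftq v₀ r') k) := by
    intro r' hr' k hk
    have hirr : ∀ x, ¬ liftq v₀ r' x x := fun x h => hq_asym r' hr' x x h h
    have htr := hq_trans r' hr'
    have htot := hq_tot r' hr'
    refine ⟨?_, ?_, ?_⟩
    · intro x y h
      unfold extRel at h
      split_ifs at h with hy hx
    --  · exact hy ▸ ((hmemN x).mp h.1).symm
      · subst hy; exact ((hmemN x).mp h.1).symm
      · subst hx; exact (hmemN y).mp h.1
      · exact hq_adj r' hr' x y h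
    · intro u v hadj
      by_cases hv : v = v₀
      · rw [hv] at hadj ⊢
        have hu0 : u ≠ v₀ := hadj.ne
        have huN : u ∈ N := (hmemN u).mpr hadj.symm
        simp [extRel, hu0, huN]
      · by_cases hu : u = v₀
        · rw [hu] at hadj ⊢
          have hv0 : v ≠ v₀ := hadj.symm.ne
          have hvN : v ∈ N := (hmemN v).mpr hadj
          simp [extRel, hv0, hv, hvN]
        · simp only [extRel, if_neg hv, if_neg hu]
          have hH : H.Adj ⟨u, hu⟩ ⟨v, hv⟩ := hadj
          have hiff := hr'.2.1 _ _ hH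
          constructor
          · rintro ⟨_, _, h⟩ ⟨_, _, h'⟩
            exact (hiff.mp h) h'
          · intro h
            exact ⟨hu, hv, hiff.mpr (fun h' => h ⟨hv, hu, h'⟩)⟩
    · -- acyclicity
      set q := liftq v₀ r' with hqdef
      set ρ₀ : V → ℕ :=
        fun u => (univ.filter fun x => Relation.TransGen q x u).card with hρ₀def
      have hρ₀ : ∀ x y, q x y → ρ₀ x < ρ₀ y := by
        intro x y hxy
        have hsub : insert x (univ.filter fun z => Relation.TransGen q z x) ⊆
            univ.filter fun z => Relation.TransGen q z y := by
          intro z hz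
          rcases Finset.mem_insert.mp hz with rfl | hz
          · exact Finset.mem_filter.mpr ⟨Finset.mem_univ _, Relation.TransGen.single hxy⟩
          · exact Finset.mem_filter.mpr ⟨Finset.mem_univ _,
              ((Finset.mem_filter.mp hz).2).tail hxy⟩
        have hnm : x ∉ univ.filter fun z => Relation.TransGen q z x := fun h =>
          hq_acyc r' hr' x (Finset.mem_filter.mp h).2
        have h := Finset.card_le_card hsub
        rw [Finset.card_insert_of_notMem hnm] at h
        exact h
      set Sk := N.filter fun u => posInN N q u < k with hSkdef
      set ρ : V → ℕ := fun x => if x = v₀ then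
          (if Sk.Nonempty then 2 * Sk.sup ρ₀ + 3 else 0) else 2 * ρ₀ x + 2 with hρdef
      have key : ∀ x y, extRel v₀ N q k x y → ρ x < ρ y := by
        intro x y h
        unfold extRel at h
        by_cases hy : y = v₀
        · rw [if_pos hy] at h
          obtain ⟨hxN, hxk⟩ := h
          have hx0 : x ≠ v₀ := fun hh => hv₀N (hh ▸ hxN)
          have hxSk : x ∈ Sk := Finset.mem_filter.mpr ⟨hxN, hxk⟩
          have hne : Sk.Nonempty := ⟨x, hxSk⟩
          have hle : ρ₀ x ≤ Sk.sup ρ₀ := Finset.le_sup hxSk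
          simp only [hρdef, if_neg hx0, hy, if_pos rfl, if_pos hne]
          omega
        · rw [if_neg hy] at h
          by_cases hx : x = v₀
          · rw [if_pos hx] at h
            obtain ⟨hyN, hky⟩ := h
            by_cases hne : Sk.Nonempty
            · have hall : ∀ u ∈ Sk, ρ₀ u < ρ₀ y := by
                intro u hu
                obtain ⟨huN, huk⟩ := Finset.mem_filter.mp hu
                exact hρ₀ u y (q_of_posInN_lt hirr htr htot huN hyN (by omega))
              have hbot : (⊥ : ℕ) < ρ₀ y := by
                obtain ⟨u, hu⟩ := hne
                have := hall u hu
                simpa using Nat.lt_of_le_of_lt (Nat.zero_le _) this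
              have hsup : Sk.sup ρ₀ < ρ₀ y := (Finset.sup_lt_iff hbot).mpr hall
              simp only [hρdef, hx, if_pos rfl, if_pos hne, if_neg hy]
              omega
            · simp only [hρdef, hx, if_pos rfl, if_neg hne, if_neg hy]
              omega
          · rw [if_neg hx] at h
            have := hρ₀ x y h
            simp only [hρdef, if_neg hx, if_neg hy]
            omega
      intro v hv
      have mono : ∀ x y, Relation.TransGen (extRel v₀ N q k) x y → ρ x < ρ y := by
        intro x y h
        induction h with
        | single h => exact key _ _ h
        | tail _ h ih => exact ih.trans (key _ _ h)
      exact absurd (mono v v hv) (lt_irrefl _)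
  -- the equivalence
  have E : {r : V → V → Prop // IsAcyclicOrientation G r} ≃
      {r' : {u : V // u ≠ v₀} → {u : V // u ≠ v₀} → Prop //
        IsAcyclicOrientation H r'} × Fin (N.card + 1) := by
    refine ⟨fun r => (⟨fun x y => r.1 x.1 y.1, restr r.1 r.2⟩,
        ⟨(N.filter fun u => r.1 u v₀).card,
          Nat.lt_succ_of_le (Finset.card_le_card (Finset.filter_subset _ _))⟩),
      fun p => ⟨extRel v₀ N (liftq v₀ p.1.1) p.2.1,
        ext_AO p.1.1 p.1.2 p.2.1 (Nat.lt_succ_iff.mp p.2.2)⟩, ?_, ?_⟩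
    · -- left inverse
      rintro ⟨r, hr⟩
      apply Subtype.ext
      dsimp only
      set r' : {u : V // u ≠ v₀} → {u : V // u ≠ v₀} → Prop :=
        fun x y => r x.1 y.1 with hr'def
      have hr' := restr r hr
      set q := liftq v₀ r' with hqdef
      have hq_iff_r : ∀ x y, q x y ↔ (x ≠ v₀ ∧ y ≠ v₀ ∧ r x y) := by
        intro x y
        constructor
        · rintro ⟨hx, hy, h⟩; exact ⟨hx, hy, h⟩
        · rintro ⟨hx, hy, h⟩; exact ⟨hx, hy, h⟩
      set T := N.filter fun u => r u v₀ with hTdef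
      have hirr : ∀ x, ¬ q x x := fun x h => hq_asym r' hr' x x h h
      have htr := hq_trans r' hr'
      have htot := hq_tot r' hr'
      have hdown : ∀ w ∈ T, ∀ u ∈ N, q u w → u ∈ T := by
        intro w hwT u huN hq
        obtain ⟨hwN, hwv⟩ := Finset.mem_filter.mp hwT
        have hru : r u w := ((hq_iff_r u w).mp hq).2.2
        refine Finset.mem_filter.mpr ⟨huN, ?_⟩
        by_contra hnr
        have hadj : G.Adj u v₀ := ((hmemN u).mp huN).symm
        have hrv : r v₀ u := by
          by_contra h'
          exact hnr ((hr.2.1 u v₀ hadj).mpr h')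
        exact hr.2.2 v₀ (((Relation.TransGen.single hrv).tail hru).tail hwv)
      have hposT : ∀ u ∈ N, (r u v₀ ↔ posInN N q u < T.card) := by
        intro u huN
        have hmi := mem_downset_iff hirr htr htot (Finset.filter_subset _ _) hdown huN
        constructor
        · intro h
          exact hmi.mp (Finset.mem_filter.mpr ⟨huN, h⟩)
        · intro h
          exact (Finset.mem_filter.mp (hmi.mpr h)).2
      funext x y
      by_cases hy : y = v₀
      · rw [hy]
        simp only [extRel, if_pos rfl]
        apply propext
        constructor
        · rintro ⟨hxN, hlt⟩
          exact (hposT x hxN).mpr hlt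
        · intro hrx
          have hadj : G.Adj x v₀ := hr.1 _ _ hrx
          have hxN : x ∈ N := (hmemN x).mpr hadj.symm
          exact ⟨hxN, (hposT x hxN).mp hrx⟩
      · by_cases hx : x = v₀
        · rw [hx]
          simp only [extRel, if_neg hy, if_pos rfl]
          apply propext
          constructor
          · rintro ⟨hyN, hge⟩
            have hadj : G.Adj v₀ y := (hmemN y).mp hyN
            exact (hr.2.1 v₀ y hadj).mpr
              (fun hry => absurd ((hposT y hyN).mp hry) (by omega))
          · intro hrv
            have hadj : G.Adj v₀ y := hr.1 _ _ hrv
            have hyN : y ∈ N := (hmemN y).mpr hadj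
            refine ⟨hyN, Nat.le_of_not_lt (fun hlt => ?_)⟩
            have hry : r y v₀ := (hposT y hyN).mpr hlt
            exact (hr.2.1 y v₀ hadj.symm).mp hry hrv
        · simp only [extRel, if_neg hy, if_neg hx]
          apply propext
          rw [hq_iff_r]
          simp [hx, hy]
    · -- right inverse
      rintro ⟨⟨r', hr'⟩, k⟩
      have hk : k.1 ≤ N.card := Nat.lt_succ_iff.mp k.2
      have hirr : ∀ x, ¬ liftq v₀ r' x x := fun x h => hq_asym r' hr' x x h h
      have htr := hq_trans r' hr'
      have htot := hq_tot r' hr'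
      refine Prod.ext ?_ ?_
      · apply Subtype.ext
        funext x y
        show extRel v₀ N (liftq v₀ r') k.1 x.1 y.1 = r' x y
        have hx : x.1 ≠ v₀ := x.2
        have hy : y.1 ≠ v₀ := y.2
        simp only [extRel, if_neg hy, if_neg hx]
        apply propext
        constructor
        · rintro ⟨hx', hy', h⟩
          exact h
        · intro h
          exact ⟨hx, hy, h⟩
      · apply Fin.ext
        show (N.filter fun u => extRel v₀ N (liftq v₀ r') k.1 u v₀).card = k.1
        have hfe : (N.filter fun u => extRel v₀ N (liftq v₀ r') k.1 u v₀) =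
            N.filter fun u => posInN N (liftq v₀ r') u < k.1 := by
          apply Finset.filter_congr
          intro u hu
          simp only [extRel, if_pos rfl]
          exact and_iff_right hu
        rw [hfe, card_filter_posInN_lt hirr htr htot hk]
  show Nat.card {r : V → V → Prop // IsAcyclicOrientation G r} = _
  rw [Nat.card_congr E, Nat.card_prod,
    Nat.card_eq_fintype_card (α := Fin (N.card + 1)), Fintype.card_fin, mul_comm]
  rfl

end Core

section UIG

lemma uig_adj_iff {n : ℕ} {m : ℕ → ℕ} (hmono : MonotoneOn m (Set.Icc 1 (n - 1)))
    (hbound : ∀ i ∈ Finset.Icc 1 (n - 1), i ≤ m i) {a b : Fin n}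
    (hab : (a : ℕ) < b) : (uig n m).Adj a b ↔ (b : ℕ) + 1 ≤ m ((a : ℕ) + 1) := by
  have hb : (b : ℕ) ≤ n - 1 := by have := b.isLt; omega
  have ha1 : (a : ℕ) + 1 ∈ Finset.Icc 1 (n - 1) := by
    simp only [Finset.mem_Icc]
    omega
  constructor
  · rintro ⟨hne, i, hi, ⟨hia, ham⟩, hib, hbm⟩
    have hi' := Finset.mem_Icc.mp hi
    have hmle : m i ≤ m ((a : ℕ) + 1) :=
      hmono ⟨by omega, by omega⟩ ⟨by omega, by omega⟩ (by omega)
    omega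
  · intro h
    refine ⟨fun hEq => ?_, (a : ℕ) + 1, ha1, ⟨le_refl _, hbound _ ha1⟩, ⟨by omega, h⟩⟩
    rw [hEq] at hab
    exact absurd hab (lt_irrefl _)

lemma uig_adj_zero_iff {n : ℕ} {m : ℕ → ℕ} (hn : 1 ≤ n)
    (hmono : MonotoneOn m (Set.Icc 1 n))
    (hbound : ∀ i ∈ Finset.Icc 1 n, i ≤ m i) (u : Fin (n + 1)) :
    (uig (n + 1) m).Adj 0 u ↔ (1 ≤ (u : ℕ) ∧ (u : ℕ) + 1 ≤ m 1) := by
  have hmono1 : MonotoneOn m (Set.Icc 1 ((n + 1) - 1)) := by simpa using hmono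
  have hbound1 : ∀ i ∈ Finset.Icc 1 ((n + 1) - 1), i ≤ m i := by
    intro i hi
    exact hbound i (by simpa using hi)
  have hzero : ((0 : Fin (n + 1)) : ℕ) = 0 := rfl
  constructor
  · intro h
    have hu0 : u ≠ 0 := h.ne'
    have h1 : 1 ≤ (u : ℕ) := by
      rcases Nat.eq_zero_or_pos (u : ℕ) with h0 | h0
      · exact absurd (Fin.ext (by simp [h0])).symm hu0
      · exact h0
    have := (uig_adj_iff hmono1 hbound1 (a := 0) (b := u) (by omega)).mp h
    exact ⟨h1, by simpa using this⟩
  · rintro ⟨h1, h2⟩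
    exact (uig_adj_iff hmono1 hbound1 (a := 0) (b := u) (by omega)).mpr (by simpa using h2)

lemma uig_nbhd_card {n : ℕ} {m : ℕ → ℕ} (hn : 1 ≤ n)
    (hmono : MonotoneOn m (Set.Icc 1 n))
    (hbound : ∀ i ∈ Finset.Icc 1 n, i ≤ m i ∧ m i ≤ n + 1) :
    (univ.filter fun u => (uig (n + 1) m).Adj 0 u).card = m 1 - 1 := by
  have hm1 : 1 ≤ m 1 ∧ m 1 ≤ n + 1 := hbound 1 (by simp [hn])
  rw [Finset.filter_congr (fun u _ =>
    uig_adj_zero_iff hn hmono (fun i hi => (hbound i hi).1) u)]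
  rw [Finset.card_bij (fun (u : Fin (n+1)) _ => (u : ℕ))
    (t := Finset.Icc 1 (m 1 - 1)) ?hi ?inj ?surj, Nat.card_Icc]
  · omega
  case hi =>
    intro a ha
    obtain ⟨-, h1, h2⟩ := Finset.mem_filter.mp ha
    simp only [Finset.mem_Icc]
    omega
  case inj =>
    intro a _ b _ h
    exact Fin.ext h
  case surj =>
    intro b hb
    obtain ⟨h1, h2⟩ := Finset.mem_Icc.mp hb
    refine ⟨⟨b, by omega⟩, ?_, rfl⟩
    simp only [Finset.mem_filter, Finset.mem_univ, true_and]
    exact ⟨h1, by omega⟩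

def succEquiv (n : ℕ) : {u : Fin (n + 1) // u ≠ 0} ≃ Fin n where
  toFun u := ⟨(u.1 : ℕ) - 1, by
    have h1 := u.1.isLt
    have h2 : (u.1 : ℕ) ≠ 0 := fun h => u.2 (Fin.ext (by simp [h]))
    omega⟩
  invFun i := ⟨⟨(i : ℕ) + 1, by omega⟩, by
    intro h
    have := congrArg Fin.val h
    simp at this⟩
  left_inv u := by
    apply Subtype.ext
    apply Fin.ext
    have h2 : (u.1 : ℕ) ≠ 0 := fun h => u.2 (Fin.ext (by simp [h]))
    simp
    omega
  right_inv i := by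
    apply Fin.ext
    simp

lemma adj_transfer_ordered {n : ℕ} {m : ℕ → ℕ} (hn : 1 ≤ n)
    (hmono : MonotoneOn m (Set.Icc 1 n))
    (hbound : ∀ i ∈ Finset.Icc 1 n, i ≤ m i ∧ m i ≤ n + 1)
    (x y : {u : Fin (n + 1) // u ≠ 0}) (hxy : (x.1 : ℕ) < (y.1 : ℕ)) :
    (uig (n + 1) m).Adj x.1 y.1 ↔
      (uig n (fun i => m (i + 1) - 1)).Adj (succEquiv n x) (succEquiv n y) := by
  have hmono1 : MonotoneOn m (Set.Icc 1 ((n + 1) - 1)) := by simpa using hmono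
  have hbound1 : ∀ i ∈ Finset.Icc 1 ((n + 1) - 1), i ≤ m i := by
    intro i hi
    exact (hbound i (by simpa using hi)).1
  have hmono' : MonotoneOn (fun i => m (i + 1) - 1) (Set.Icc 1 (n - 1)) := by
    intro i hi j hj hij
    obtain ⟨hi1, hi2⟩ := hi
    obtain ⟨hj1, hj2⟩ := hj
    have h1 := hmono (Set.mem_Icc.mpr ⟨by omega, by omega⟩)
      (Set.mem_Icc.mpr ⟨by omega, by omega⟩) (by omega : i + 1 ≤ j + 1)
    simp only
    omega
  have hbound' : ∀ i ∈ Finset.Icc 1 (n - 1), i ≤ m (i + 1) - 1 := by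
    intro i hi
    obtain ⟨h1, h2⟩ := Finset.mem_Icc.mp hi
    have := (hbound (i + 1) (Finset.mem_Icc.mpr ⟨by omega, by omega⟩)).1
    omega
  have hx1 : 1 ≤ (x.1 : ℕ) := by
    rcases Nat.eq_zero_or_pos (x.1 : ℕ) with h0 | h0
    · exact absurd (Fin.ext (by simp [h0])) x.2
    · exact h0
  have hyn : (y.1 : ℕ) ≤ n := by have := y.1.isLt; omega
  have hsx : ((succEquiv n x : Fin n) : ℕ) = (x.1 : ℕ) - 1 := rfl
  have hsy : ((succEquiv n y : Fin n) : ℕ) = (y.1 : ℕ) - 1 := rfl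
  rw [uig_adj_iff hmono1 hbound1 hxy,
    uig_adj_iff hmono' hbound' (a := succEquiv n x) (b := succEquiv n y)
      (by rw [hsx, hsy]; omega)]
  rw [hsx, hsy]
  have hEq : (x.1 : ℕ) - 1 + 1 + 1 = (x.1 : ℕ) + 1 := by omega
  rw [hEq]
  have hge : (x.1 : ℕ) + 1 ≤ m ((x.1 : ℕ) + 1) :=
    (hbound _ (Finset.mem_Icc.mpr ⟨by omega, by omega⟩)).1
  omega

lemma adj_transfer {n : ℕ} {m : ℕ → ℕ} (hn : 1 ≤ n)
    (hmono : MonotoneOn m (Set.Icc 1 n))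
    (hbound : ∀ i ∈ Finset.Icc 1 n, i ≤ m i ∧ m i ≤ n + 1)
    (x y : {u : Fin (n + 1) // u ≠ 0}) :
    (uig (n + 1) m).Adj x.1 y.1 ↔
      (uig n (fun i => m (i + 1) - 1)).Adj (succEquiv n x) (succEquiv n y) := by
  rcases lt_trichotomy ((x.1 : ℕ)) ((y.1 : ℕ)) with h | h | h
  · exact adj_transfer_ordered hn hmono hbound x y h
  · have : x = y := Subtype.ext (Fin.ext h)
    rw [this]
    exact iff_of_false ((uig (n + 1) m).loopless.irrefl _) ((uig n _).loopless.irrefl _)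
  · rw [SimpleGraph.adj_comm (uig (n + 1) m) x.1 y.1,
      SimpleGraph.adj_comm (uig n _) (succEquiv n x) (succEquiv n y)]
    exact adj_transfer_ordered hn hmono hbound y x h

end UIG

lemma uig_count_aux (n : ℕ) : ∀ (m : ℕ → ℕ), MonotoneOn m (Set.Icc 1 (n - 1)) →
    (∀ i ∈ Finset.Icc 1 (n - 1), i ≤ m i ∧ m i ≤ n) →
    acyclicOrientationCount (uig n m) = ∏ i ∈ Finset.Icc 1 (n - 1), (m i - i + 1) := by
  induction n with
  | zero =>
    intro m _ _
    rw [acyclicOrientationCount_subsingleton]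
    simp
  | succ k ih =>
    intro m hmono hbound
    rcases Nat.eq_zero_or_pos k with rfl | hk
    · haveI : Subsingleton (Fin (0 + 1)) := by
        constructor
        intro a b
        apply Fin.ext
        omega
      rw [acyclicOrientationCount_subsingleton]
      simp
    · -- k ≥ 1
      have hmono1 : MonotoneOn m (Set.Icc 1 k) := by simpa using hmono
      have hbound1 : ∀ i ∈ Finset.Icc 1 k, i ≤ m i ∧ m i ≤ k + 1 := by
        intro i hi
        exact hbound i (by simpa using hi)
      have hm1 : 1 ≤ m 1 ∧ m 1 ≤ k + 1 := hbound1 1 (Finset.mem_Icc.mpr ⟨le_refl _, hk⟩)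
      -- vertex 0 is simplicial
      have hcl : ∀ u w, (uig (k + 1) m).Adj 0 u → (uig (k + 1) m).Adj 0 w →
          u ≠ w → (uig (k + 1) m).Adj u w := by
        intro u w hu hw hne
        obtain ⟨hu1, hu2⟩ := (uig_adj_zero_iff hk hmono1 (fun i hi => (hbound1 i hi).1) u).mp hu
        obtain ⟨hw1, hw2⟩ := (uig_adj_zero_iff hk hmono1 (fun i hi => (hbound1 i hi).1) w).mp hw
        have hmono2 : MonotoneOn m (Set.Icc 1 ((k + 1) - 1)) := by simpa using hmono1
        have hbound2 : ∀ i ∈ Finset.Icc 1 ((k + 1) - 1), i ≤ m i := by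
          intro i hi
          exact (hbound1 i (by simpa using hi)).1
        have hvne : (u : ℕ) ≠ (w : ℕ) := fun h => hne (Fin.ext h)
        rcases Nat.lt_or_ge (u : ℕ) (w : ℕ) with h | h
        · refine (uig_adj_iff hmono2 hbound2 h).mpr ?_
          have hwk : (w : ℕ) ≤ k := by have := w.isLt; omega
          have : m 1 ≤ m ((u : ℕ) + 1) :=
            hmono1 (Set.mem_Icc.mpr ⟨le_refl _, by omega⟩)
              (Set.mem_Icc.mpr ⟨by omega, by omega⟩) (by omega)
          omega
        · have h' : (w : ℕ) < (u : ℕ) := by omega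
          rw [SimpleGraph.adj_comm]
          refine (uig_adj_iff hmono2 hbound2 h').mpr ?_
          have huk : (u : ℕ) ≤ k := by have := u.isLt; omega
          have : m 1 ≤ m ((w : ℕ) + 1) :=
            hmono1 (Set.mem_Icc.mpr ⟨le_refl _, by omega⟩)
              (Set.mem_Icc.mpr ⟨by omega, by omega⟩) (by omega)
          omega
      rw [acyclicOrientationCount_simplicial (uig (k + 1) m) 0 hcl]
      rw [uig_nbhd_card hk hmono1 hbound1]
      rw [acyclicOrientationCount_congr (succEquiv k)
        (SimpleGraph.comap (Subtype.val : {u : Fin (k + 1) // u ≠ 0} → Fin (k + 1))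
          (uig (k + 1) m))
        (uig k (fun i => m (i + 1) - 1))
        (fun x y => adj_transfer hk hmono1 hbound1 x y)]
      have hmono' : MonotoneOn (fun i => m (i + 1) - 1) (Set.Icc 1 (k - 1)) := by
        intro i hi j hj hij
        obtain ⟨hi1, hi2⟩ := hi
        obtain ⟨hj1, hj2⟩ := hj
        have h1 := hmono1 (Set.mem_Icc.mpr ⟨by omega, by omega⟩)
          (Set.mem_Icc.mpr ⟨by omega, by omega⟩) (by omega : i + 1 ≤ j + 1)
        simp only
        omega
      have hbound' : ∀ i ∈ Finset.Icc 1 (k - 1), i ≤ m (i + 1) - 1 ∧ m (i + 1) - 1 ≤ k := by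
        intro i hi
        obtain ⟨h1, h2⟩ := Finset.mem_Icc.mp hi
        have := hbound1 (i + 1) (Finset.mem_Icc.mpr ⟨by omega, by omega⟩)
        omega
      rw [ih (fun i => m (i + 1) - 1) hmono' hbound']
      -- product manipulation
      have hsplit : Finset.Icc 1 ((k + 1) - 1) = insert 1 (Finset.Icc 2 k) := by
        ext j
        simp only [Finset.mem_Icc, Finset.mem_insert]
        omega
      rw [hsplit, Finset.prod_insert (by simp)]
      have hmap : Finset.Icc 2 k =
          (Finset.Icc 1 (k - 1)).map ⟨fun i => i + 1, add_left_injective 1⟩ := by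
        ext j
        simp only [Finset.mem_map, Finset.mem_Icc, Function.Embedding.coeFn_mk]
        constructor
        · intro h
          exact ⟨j - 1, by omega, by omega⟩
        · rintro ⟨i, hi, rfl⟩
          omega
      rw [hmap, Finset.prod_map]
      congr 1
      apply Finset.prod_congr rfl
      intro i hi
      obtain ⟨h1, h2⟩ := Finset.mem_Icc.mp hi
      have := (hbound1 (i + 1) (Finset.mem_Icc.mpr ⟨by omega, by omega⟩)).1
      simp only [Function.Embedding.coeFn_mk]
      omega


/-- The number of acyclic orientations of the unit interval graph determined by a weakly
increasing sequence `m = (m_1, ..., m_{n-1})` with `i ≤ m_i ≤ n` equals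
`∏_{i=1}^{n-1} (m_i - i + 1)`. -/
theorem uig_acyclicOrientationCount (n : ℕ) (m : ℕ → ℕ)
    (hmono : MonotoneOn m (Set.Icc 1 (n - 1)))
    (hbound : ∀ i ∈ Finset.Icc 1 (n - 1), i ≤ m i ∧ m i ≤ n) :
    acyclicOrientationCount (uig n m) = ∏ i ∈ Finset.Icc 1 (n - 1), (m i - i + 1) := by
  exact uig_count_aux n m hmono hbound
end
end

section
/- For the star graph S_n on n ≥ 4 vertices and any partition λ = (λ_1, λ_2) of n with both parts at least 2, the coefficient of e_λ in X_{S_n} equals -n if λ_1 ≠ λ_2, and -n/2 if λ_1 = λ_2. -/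
open MvPolynomial Finset
open scoped Classical

noncomputable section

/-- The star graph on `n` vertices: vertex `0` is adjacent to all other vertices and
there are no other edges. -/
def starGraph (n : ℕ) : SimpleGraph (Fin n) where
  Adj a b := a ≠ b ∧ ((a : ℕ) = 0 ∨ (b : ℕ) = 0)
  symm := by
    constructor
    rintro a b ⟨h1, h2⟩
    exact ⟨h1.symm, h2.symm⟩
  loopless := ⟨fun a h => h.1 rfl⟩

namespace StarAux
variable (n : ℕ)
def idx (hn : 0 < n) (i : ℕ) : Fin n := ⟨min i (n-1), by omega⟩
def phi : MvPolynomial (Fin n) ℚ →ₐ[ℚ] MvPolynomial (Fin n) ℚ :=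
  ((Subalgebra.val _).comp (esymmAlgEquiv (σ := Fin n) (R := ℚ) (Fintype.card_fin n)).toAlgHom)
lemma phi_injective : Function.Injective (phi n) :=
  Subtype.val_injective.comp (esymmAlgEquiv (σ := Fin n) (R := ℚ) (Fintype.card_fin n)).injective
lemma phi_X (i : Fin n) : phi n (X i) = esymm (Fin n) ℚ ((i : ℕ) + 1) := by
  simp [phi, esymmAlgEquiv, esymmAlgHom, aeval_X]
def Pp (k : ℕ) : MvPolynomial (Fin n) ℚ :=
  (esymmAlgEquiv (σ := Fin n) (R := ℚ) (Fintype.card_fin n)).symm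
    ⟨psum (Fin n) ℚ k, psum_isSymmetric _ _ k⟩
lemma phi_Pp (k : ℕ) : phi n (Pp n k) = psum (Fin n) ℚ k := by
  simp [phi, Pp]

lemma idx_val (hn : 0 < n) (i : ℕ) (h : i ≤ n - 1) : ((idx n hn i : Fin n) : ℕ) = i := by
  simp [idx, Nat.min_eq_left h]

lemma Pp_rec (hn : 0 < n) (k : ℕ) (h1 : 0 < k) (hkn : k ≤ n) :
    Pp n k = (-1) ^ (k + 1) * (k : MvPolynomial (Fin n) ℚ) * X (idx n hn (k - 1)) -
      ∑ a ∈ antidiagonal k with a.1 ∈ Set.Ioo 0 k,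
        (-1) ^ a.1 * X (idx n hn (a.1 - 1)) * Pp n a.2 := by
  apply phi_injective n
  rw [phi_Pp, psum_eq_mul_esymm_sub_sum (Fin n) ℚ k h1, map_sub, map_mul, map_mul, map_pow,
    map_neg, map_one, map_natCast, phi_X, map_sum]
  rw [idx_val n hn (k-1) (by omega)]
  have hk1 : k - 1 + 1 = k := by omega
  rw [hk1]
  congr 1
  refine Finset.sum_congr rfl fun a ha => ?_
  simp only [mem_filter, Finset.HasAntidiagonal.mem_antidiagonal, Set.mem_Ioo] at ha
  rw [map_mul, map_mul, map_pow, map_neg, map_one, phi_X, phi_Pp,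
    idx_val n hn (a.1 - 1) (by omega)]
  have h2 : a.1 - 1 + 1 = a.1 := by omega
  rw [h2]

end StarAux

namespace StarAux

variable (n : ℕ)

lemma constCoeff_Pp (hn : 0 < n) (k : ℕ) (h1 : 0 < k) (hkn : k ≤ n) :
    constantCoeff (Pp n k) = 0 := by
  rw [Pp_rec n hn k h1 hkn]
  simp

lemma idx_eq_iff (hn : 0 < n) (i : ℕ) (hi : i ≤ n - 1) (m : Fin n) :
    idx n hn i = m ↔ (m : ℕ) = i := by
  rw [Fin.ext_iff, idx_val n hn i hi]
  exact eq_comm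

lemma coeff_single_Pp (hn : 0 < n) (k : ℕ) (h1 : 0 < k) (hkn : k ≤ n) (m : Fin n) :
    coeff (Finsupp.single m 1) (Pp n k) =
      if (m : ℕ) = k - 1 then (-1) ^ (k + 1) * (k : ℚ) else 0 := by
  rw [Pp_rec n hn k h1 hkn, coeff_sub]
  have hC : ((-1 : MvPolynomial (Fin n) ℚ)) ^ (k + 1) * (k : MvPolynomial (Fin n) ℚ)
      = C ((-1) ^ (k + 1) * (k : ℚ)) := by
    simp [map_mul]
  have hA : coeff (Finsupp.single m 1)
      ((-1) ^ (k + 1) * (k : MvPolynomial (Fin n) ℚ) * X (idx n hn (k - 1)))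
      = if (m : ℕ) = k - 1 then (-1) ^ (k + 1) * (k : ℚ) else 0 := by
    rw [hC, coeff_C_mul, coeff_X']
    simp only [Finsupp.single_left_inj (one_ne_zero : (1:ℕ) ≠ 0),
      idx_eq_iff n hn (k - 1) (by omega)]
    split <;> simp
  have hB : ∀ a ∈ antidiagonal k |>.filter (fun a => a.1 ∈ Set.Ioo 0 k),
      coeff (Finsupp.single m 1) ((-1) ^ a.1 * X (idx n hn (a.1 - 1)) * Pp n a.2) = 0 := by
    intro a ha
    simp only [mem_filter, Finset.HasAntidiagonal.mem_antidiagonal, Set.mem_Ioo] at ha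
    have hre : (-1) ^ a.1 * X (idx n hn (a.1 - 1)) * Pp n a.2
        = X (idx n hn (a.1 - 1)) * ((-1) ^ a.1 * Pp n a.2) := by ring
    rw [hre, coeff_X_mul']
    split
    · next hmem =>
      rw [Finsupp.support_single_ne_zero _ one_ne_zero, Finset.mem_singleton] at hmem
      subst hmem
      rw [tsub_self]
      show constantCoeff _ = 0
      rw [map_mul, constCoeff_Pp n hn a.2 (by omega) (by omega), mul_zero]
    · rfl
  rw [hA, coeff_sum, Finset.sum_congr rfl hB, Finset.sum_const_zero, sub_zero]

end StarAux

namespace StarAux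

variable (n : ℕ)

lemma coeff_pair_Pp (hn : 0 < n) (a b : ℕ) (ha : 2 ≤ a) (hb : 2 ≤ b) (hab : a + b = n) :
    coeff (Finsupp.single (idx n hn (a - 1)) 1 + Finsupp.single (idx n hn (b - 1)) 1) (Pp n n) =
      if a = b then (n : ℚ) / 2 else (-1) ^ n * n := by
  set ia := idx n hn (a - 1) with hia_def
  set ib := idx n hn (b - 1) with hib_def
  have hia : (ia : ℕ) = a - 1 := idx_val n hn _ (by omega)
  have hib : (ib : ℕ) = b - 1 := idx_val n hn _ (by omega)
  set t : Fin n →₀ ℕ := Finsupp.single ia 1 + Finsupp.single ib 1 with ht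
  have hsupp : ∀ j : Fin n, j ∈ t.support → j = ia ∨ j = ib := by
    intro j hj
    by_contra hcon
    push_neg at hcon
    rw [Finsupp.mem_support_iff, ht, Finsupp.add_apply, Finsupp.single_apply,
      Finsupp.single_apply, if_neg (fun h => hcon.1 h.symm),
      if_neg (fun h => hcon.2 h.symm)] at hj
    exact hj rfl
  have hmemia : ia ∈ t.support := by
    rw [Finsupp.mem_support_iff, ht, Finsupp.add_apply, Finsupp.single_apply, if_pos rfl]
    omega
  have hmemib : ib ∈ t.support := by
    rw [Finsupp.mem_support_iff, ht, Finsupp.add_apply, Finsupp.single_apply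
      (a := ib) (b := (1:ℕ)), if_pos rfl]
    omega
  rw [Pp_rec n hn n (by omega) le_rfl, coeff_sub]
  -- the linear term contributes 0
  have h0 : coeff t ((-1) ^ (n + 1) * (n : MvPolynomial (Fin n) ℚ) * X (idx n hn (n - 1))) = 0 := by
    have hC : ((-1 : MvPolynomial (Fin n) ℚ)) ^ (n + 1) * (n : MvPolynomial (Fin n) ℚ)
        = C ((-1) ^ (n + 1) * (n : ℚ)) := by simp
    rw [hC, coeff_C_mul, coeff_X', if_neg, mul_zero]
    intro h
    set ι := idx n hn (n - 1) with hι_def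
    have hι : (ι : ℕ) = n - 1 := idx_val n hn _ le_rfl
    have hne1 : ia ≠ ι := by intro hcon; rw [Fin.ext_iff, hia, hι] at hcon; omega
    have hne2 : ib ≠ ι := by intro hcon; rw [Fin.ext_iff, hib, hι] at hcon; omega
    have h1 := DFunLike.congr_fun h ι
    rw [ht, Finsupp.add_apply, Finsupp.single_apply, Finsupp.single_apply,
      Finsupp.single_apply, if_pos rfl, if_neg hne1, if_neg hne2] at h1
    exact absurd h1 (by norm_num)
  rw [h0]
  -- analysis of the sum
  have hC' : ∀ i : ℕ, ((-1 : MvPolynomial (Fin n) ℚ)) ^ i = C ((-1 : ℚ) ^ i) := by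
    intro i; simp
  have key : ∀ p : ℕ × ℕ, p.1 + p.2 = n → 0 < p.1 → p.1 < n →
      coeff t ((-1) ^ p.1 * X (idx n hn (p.1 - 1)) * Pp n p.2) =
        (if p.1 = a then (-1 : ℚ) ^ p.1 * ((-1) ^ (p.2 + 1) * p.2) else 0) +
        (if p.1 = b ∧ a ≠ b then (-1 : ℚ) ^ p.1 * ((-1) ^ (p.2 + 1) * p.2) else 0) := by
    intro p hp hp0 hpn
    have hre : (-1) ^ p.1 * X (idx n hn (p.1 - 1)) * Pp n p.2
        = ((-1) ^ p.1 * Pp n p.2) * X (idx n hn (p.1 - 1)) := by ring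
    have hval : ((idx n hn (p.1 - 1) : Fin n) : ℕ) = p.1 - 1 := idx_val n hn _ (by omega)
    rw [hre, coeff_mul_X']
    by_cases hA : p.1 = a
    · have hidx : idx n hn (p.1 - 1) = ia := by rw [Fin.ext_iff, hval, hia, hA]
      rw [hidx, if_pos hmemia, ht, add_tsub_cancel_left, hC', coeff_C_mul,
        coeff_single_Pp n hn p.2 (by omega) (by omega), hib,
        if_pos (show b - 1 = p.2 - 1 by omega), if_pos hA,
        if_neg (fun h => h.2 (by rw [← hA, h.1])), add_zero]
    · by_cases hB : p.1 = b
      · have hidx : idx n hn (p.1 - 1) = ib := by rw [Fin.ext_iff, hval, hib, hB]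
        rw [hidx, if_pos hmemib, ht, add_tsub_cancel_right, hC', coeff_C_mul,
          coeff_single_Pp n hn p.2 (by omega) (by omega), hia,
          if_pos (show a - 1 = p.2 - 1 by omega), if_neg hA,
          if_pos (⟨hB, fun h => hA (by rw [hB, ← h])⟩ : p.1 = b ∧ a ≠ b), zero_add]
      · have hnotin : idx n hn (p.1 - 1) ∉ t.support := by
          intro hin
          rcases hsupp _ hin with h | h
          · rw [Fin.ext_iff, hval, hia] at h; omega
          · rw [Fin.ext_iff, hval, hib] at h; omega
        rw [if_neg hnotin, if_neg hA, if_neg (fun h => hB h.1)]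
        simp
  rw [coeff_sum]
  set S := (antidiagonal n).filter (fun p : ℕ × ℕ => p.1 ∈ Set.Ioo 0 n) with hS
  have hmem1 : ((a, b) : ℕ × ℕ) ∈ S := by
    simp only [hS, mem_filter, Finset.HasAntidiagonal.mem_antidiagonal, Set.mem_Ioo]
    omega
  have hmem2 : ((b, a) : ℕ × ℕ) ∈ S := by
    simp only [hS, mem_filter, Finset.HasAntidiagonal.mem_antidiagonal, Set.mem_Ioo]
    omega
  have hs : ∑ p ∈ S, coeff t ((-1) ^ p.1 * X (idx n hn (p.1 - 1)) * Pp n p.2)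
      = ∑ p ∈ S, ((if p.1 = a then (-1 : ℚ) ^ p.1 * ((-1) ^ (p.2 + 1) * p.2) else 0) +
        (if p.1 = b ∧ a ≠ b then (-1 : ℚ) ^ p.1 * ((-1) ^ (p.2 + 1) * p.2) else 0)) :=
    Finset.sum_congr rfl (fun p hp => by
      simp only [hS, mem_filter, Finset.HasAntidiagonal.mem_antidiagonal, Set.mem_Ioo] at hp
      exact key p hp.1 hp.2.1 hp.2.2)
  rw [hs, Finset.sum_add_distrib]
  have hs1 : ∑ p ∈ S, (if p.1 = a then (-1 : ℚ) ^ p.1 * ((-1) ^ (p.2 + 1) * p.2) else 0)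
      = (-1 : ℚ) ^ a * ((-1) ^ (b + 1) * b) := by
    rw [Finset.sum_eq_single_of_mem (a, b) hmem1]
    · simp
    · intro p hp hne
      simp only [hS, mem_filter, Finset.HasAntidiagonal.mem_antidiagonal, Set.mem_Ioo] at hp
      exact if_neg (fun h => hne (Prod.ext_iff.mpr ⟨h, by omega⟩))
  have hs2 : ∑ p ∈ S, (if p.1 = b ∧ a ≠ b then (-1 : ℚ) ^ p.1 * ((-1) ^ (p.2 + 1) * p.2) else 0)
      = if a = b then 0 else (-1 : ℚ) ^ b * ((-1) ^ (a + 1) * a) := by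
    by_cases hab' : a = b
    · rw [if_pos hab']
      exact Finset.sum_eq_zero (fun p _ => if_neg (fun h => h.2 hab'))
    · rw [if_neg hab', Finset.sum_eq_single_of_mem (b, a) hmem2]
      · rw [if_pos ⟨rfl, hab'⟩]
      · intro p hp hne
        simp only [hS, mem_filter, Finset.HasAntidiagonal.mem_antidiagonal, Set.mem_Ioo] at hp
        exact if_neg (fun h => hne (Prod.ext_iff.mpr ⟨h.1, by omega⟩))
  rw [hs1, hs2]
  by_cases hab' : a = b
  · rw [if_pos hab', if_pos hab']
    have hss : (-1 : ℚ) ^ a * (-1 : ℚ) ^ a = 1 := by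
      rw [← pow_add]; exact Even.neg_one_pow ⟨a, rfl⟩
    have hn2 : (n : ℚ) = 2 * a := by
      have : n = 2 * a := by omega
      rw [this]; push_cast; ring
    have hb' : (b : ℚ) = a := by rw [← hab']
    rw [pow_succ, hb', ← hab']
    linear_combination (a : ℚ) * hss - hn2 / 2
  · rw [if_neg hab', if_neg hab', ← hab, pow_add]
    push_cast
    ring

end StarAux

namespace StarAux

variable (n : ℕ)

lemma csf_star_sum (hn : 4 ≤ n) :
    csf n (starGraph n) = ∑ j : Fin n,
      X j * ((∑ i : Fin n, X i) - X j) ^ (n - 1) := by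
  have hn0 : 0 < n := by omega
  set z : Fin n := ⟨0, hn0⟩ with hz
  have hprop : ∀ κ : Fin n → Fin n,
      (∀ u v, (starGraph n).Adj u v → κ u ≠ κ v) ↔ (∀ v, v ≠ z → κ v ≠ κ z) := by
    intro κ
    constructor
    · intro h v hv
      exact h v z ⟨hv, Or.inr rfl⟩
    · intro h u v hadj
      obtain ⟨hne, h0⟩ := hadj
      rcases h0 with h0 | h0
      · have hu : u = z := Fin.ext h0
        subst hu
        exact fun he => h v (fun hv => hne hv.symm) he.symm
      · have hv : v = z := Fin.ext h0
        subst hv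
        exact h u hne
  rw [csf, ← Finset.sum_fiberwise_of_maps_to (g := fun κ : Fin n → Fin n => κ z)
    (t := (univ : Finset (Fin n))) (fun κ _ => mem_univ _)]
  refine Finset.sum_congr rfl fun j _ => ?_
  refine (Finset.sum_congr ?_
    (fun κ (_ : κ ∈ Fintype.piFinset fun v => if v = z then ({j} : Finset (Fin n))
      else univ.erase j) => rfl)).trans ?_
  · ext κ
    simp only [Finset.mem_filter, Finset.mem_univ, true_and, Fintype.mem_piFinset, hprop]
    constructor
    · rintro ⟨hpr, hzj⟩ v
      by_cases hv : v = z
      · rw [if_pos hv, Finset.mem_singleton, hv, hzj]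
      · rw [if_neg hv, Finset.mem_erase]
        exact ⟨by rw [← hzj]; exact hpr v hv, mem_univ _⟩
    · intro hall
      have hzj : κ z = j := by
        have := hall z
        rwa [if_pos rfl, Finset.mem_singleton] at this
      refine ⟨fun v hv => ?_, hzj⟩
      have := hall v
      rw [if_neg hv, Finset.mem_erase] at this
      rw [hzj]
      exact this.1
  rw [← Finset.prod_univ_sum]
  rw [← Finset.mul_prod_erase (univ : Finset (Fin n))
    (fun v => ∑ c ∈ (if v = z then {j} else univ.erase j), X c) (mem_univ z)]
  rw [if_pos rfl, Finset.sum_singleton]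
  congr 1
  rw [Finset.prod_congr rfl (fun v hv => ?_), Finset.prod_const,
    Finset.card_erase_of_mem (mem_univ z), Finset.card_univ, Fintype.card_fin]
  rw [if_neg (Finset.mem_erase.mp hv).1, Finset.sum_erase_eq_sub (mem_univ j)]

end StarAux

namespace StarAux

variable (n : ℕ)

lemma csf_star (hn : 4 ≤ n) :
    csf n (starGraph n) = ∑ k ∈ range n,
      ((-1 : ℚ) ^ (k + (n - 1)) * ((n - 1).choose k : ℚ)) •
        (psum (Fin n) ℚ (n - k) * (esymm (Fin n) ℚ 1) ^ k) := by
  rw [csf_star_sum n hn, esymm_one]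
  set S : MvPolynomial (Fin n) ℚ := ∑ i : Fin n, X i with hS
  have hsub : ∀ j : Fin n, (S - X j) ^ (n - 1)
      = ∑ k ∈ range n, (-1) ^ (k + (n - 1)) * S ^ k * (X j) ^ (n - 1 - k)
          * ((n - 1).choose k : MvPolynomial (Fin n) ℚ) := by
    intro j
    have h := sub_pow S (X j) (n - 1)
    rw [show n - 1 + 1 = n by omega] at h
    exact h
  simp_rw [hsub, Finset.mul_sum]
  rw [Finset.sum_comm]
  refine Finset.sum_congr rfl fun k hk => ?_
  rw [Finset.mem_range] at hk
  have hX : ∀ j : Fin n, X j * ((-1) ^ (k + (n - 1)) * S ^ k * (X j) ^ (n - 1 - k)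
      * ((n - 1).choose k : MvPolynomial (Fin n) ℚ))
      = ((-1) ^ (k + (n - 1)) * ((n - 1).choose k : MvPolynomial (Fin n) ℚ))
          * (X j ^ (n - k) * S ^ k) := by
    intro j
    have h1 : X j * (X j : MvPolynomial (Fin n) ℚ) ^ (n - 1 - k) = X j ^ (n - k) := by
      rw [← pow_succ']
      congr 1
      omega
    rw [show X j * ((-1) ^ (k + (n - 1)) * S ^ k * (X j) ^ (n - 1 - k)
        * ((n - 1).choose k : MvPolynomial (Fin n) ℚ))
        = (X j * (X j) ^ (n - 1 - k)) * ((-1) ^ (k + (n - 1)) * S ^ k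
        * ((n - 1).choose k : MvPolynomial (Fin n) ℚ)) from by ring, h1]
    ring
  simp_rw [hX]
  rw [← Finset.mul_sum, ← Finset.sum_mul]
  have hpsum : ∑ j : Fin n, (X j : MvPolynomial (Fin n) ℚ) ^ (n - k) = psum (Fin n) ℚ (n - k) := rfl
  rw [hpsum, smul_eq_C_mul]
  have hCast : (C ((-1 : ℚ) ^ (k + (n - 1)) * ((n - 1).choose k : ℚ)) : MvPolynomial (Fin n) ℚ)
      = (-1) ^ (k + (n - 1)) * ((n - 1).choose k : MvPolynomial (Fin n) ℚ) := by
    rw [map_mul, map_pow, map_neg, map_one, map_natCast]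
  rw [hCast]

end StarAux

namespace StarAux

variable (n : ℕ)


lemma parts_le (μ : n.Partition) : ∀ p ∈ μ.parts, p ≤ n := fun p hp => by
  conv_rhs => rw [← μ.parts_sum]
  exact Multiset.single_le_sum (fun x _ => Nat.zero_le x) p hp

/-- exponent vector of the `e`-monomial attached to a partition -/
def expo (hn : 0 < n) (μ : n.Partition) : Fin n →₀ ℕ :=
  (μ.parts.map (fun p => Finsupp.single (idx n hn (p - 1)) 1)).sum

lemma phi_monomial_expo (hn : 0 < n) (μ : n.Partition) :
    phi n (monomial (expo n hn μ) 1) = esymmPart (Fin n) ℚ μ := by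
  have key : ∀ s : Multiset ℕ, (∀ p ∈ s, 0 < p ∧ p ≤ n) →
      phi n (monomial ((s.map (fun p => Finsupp.single (idx n hn (p - 1)) 1)).sum) 1)
        = (s.map (esymm (Fin n) ℚ)).prod := by
    intro s
    induction s using Multiset.induction_on with
    | empty => simp
    | cons p s ih =>
      intro hb
      have hp := hb p (Multiset.mem_cons_self p s)
      rw [Multiset.map_cons, Multiset.sum_cons, monomial_single_add, pow_one, map_mul,
        Multiset.map_cons, Multiset.prod_cons, ih (fun q hq => hb q (Multiset.mem_cons_of_mem hq)),
        phi_X, idx_val n hn (p - 1) (by omega), show p - 1 + 1 = p by omega]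
  rw [expo, esymmPart]
  exact key μ.parts (fun p hp => ⟨μ.parts_pos hp, parts_le n μ p hp⟩)

lemma expo_apply (hn : 0 < n) (μ : n.Partition) (m : Fin n) :
    expo n hn μ m = μ.parts.count ((m : ℕ) + 1) := by
  have key : ∀ s : Multiset ℕ, (∀ p ∈ s, 0 < p ∧ p ≤ n) →
      ((s.map (fun p => Finsupp.single (idx n hn (p - 1)) (1 : ℕ))).sum) m
        = s.count ((m : ℕ) + 1) := by
    intro s
    induction s using Multiset.induction_on with
    | empty => simp
    | cons p s ih =>
      intro hb
      have hp := hb p (Multiset.mem_cons_self p s)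
      rw [Multiset.map_cons, Multiset.sum_cons, Finsupp.add_apply,
        ih (fun q hq => hb q (Multiset.mem_cons_of_mem hq)), Multiset.count_cons,
        Finsupp.single_apply]
      have hidx : ((idx n hn (p - 1) : Fin n) : ℕ) = p - 1 := idx_val n hn _ (by omega)
      by_cases h : (m : ℕ) + 1 = p
      · have hcc : idx n hn (p - 1) = m := by rw [Fin.ext_iff, hidx]; omega
        rw [if_pos hcc, if_pos h]
        omega
      · have hcc : ¬ (idx n hn (p - 1) = m) := by
          intro hcon; rw [Fin.ext_iff, hidx] at hcon; omega
        rw [if_neg hcc, if_neg h]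
        omega
  rw [expo]
  exact key μ.parts (fun p hp => ⟨μ.parts_pos hp, parts_le n μ p hp⟩)

lemma count_pair (a b v : ℕ) :
    ({a, b} : Multiset ℕ).count v = (if v = a then 1 else 0) + (if v = b then 1 else 0) := by
  rw [show ({a, b} : Multiset ℕ) = a ::ₘ {b} from rfl, Multiset.count_cons,
    Multiset.count_singleton]
  ring

lemma twoP_parts (a b : ℕ) (ha : 2 ≤ a) (hb : 2 ≤ b) (hab : a + b = n) :
    (twoP n a b hab).parts = ({a, b} : Multiset ℕ) := by
  have hdef : (twoP n a b hab).parts = Multiset.filter (· ≠ 0) ({a, b} : Multiset ℕ) := rfl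
  rw [hdef, Multiset.filter_eq_self]
  intro x hx
  simp only [Multiset.insert_eq_cons, Multiset.mem_cons, Multiset.mem_singleton] at hx
  rcases hx with h | h <;> omega

lemma expo_eq_iff (hn : 0 < n) (a b : ℕ) (ha : 2 ≤ a) (hb : 2 ≤ b) (hab : a + b = n)
    (μ : n.Partition) :
    expo n hn μ = Finsupp.single (idx n hn (a - 1)) 1 + Finsupp.single (idx n hn (b - 1)) 1
      ↔ μ = twoP n a b hab := by
  have hia : ((idx n hn (a - 1) : Fin n) : ℕ) = a - 1 := idx_val n hn _ (by omega)
  have hib : ((idx n hn (b - 1) : Fin n) : ℕ) = b - 1 := idx_val n hn _ (by omega)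
  have hval : ∀ ν : n.Partition, expo n hn ν
      = Finsupp.single (idx n hn (a - 1)) 1 + Finsupp.single (idx n hn (b - 1)) 1
      ↔ ν.parts = ({a, b} : Multiset ℕ) := by
    intro ν
    rw [Finsupp.ext_iff, Multiset.ext]
    constructor
    · intro h v
      rcases Nat.lt_or_ge v 1 with hv | hv
      · -- v = 0
        have h0 : v = 0 := by omega
        subst h0
        rw [Multiset.count_eq_zero_of_notMem (fun hm => absurd (ν.parts_pos hm) (by omega)),
          Multiset.count_eq_zero_of_notMem (by intro hm; simp only [Multiset.insert_eq_cons,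
            Multiset.mem_cons, Multiset.mem_singleton] at hm; omega)]
      rcases Nat.lt_or_ge n v with hv2 | hv2
      · -- v > n
        rw [Multiset.count_eq_zero_of_notMem (fun hm => absurd (parts_le n ν v hm) (by omega)),
          Multiset.count_eq_zero_of_notMem (by intro hm; simp only [Multiset.insert_eq_cons,
            Multiset.mem_cons, Multiset.mem_singleton] at hm; omega)]
      · have hmemv : v - 1 < n := by omega
        have hm := h ⟨v - 1, hmemv⟩
        rw [expo_apply n hn ν ⟨v - 1, hmemv⟩, Finsupp.add_apply, Finsupp.single_apply,
          Finsupp.single_apply] at hm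
        have hmval : ((⟨v - 1, hmemv⟩ : Fin n) : ℕ) = v - 1 := rfl
        rw [show v - 1 + 1 = v by omega] at hm
        rw [hm, count_pair]
        congr 1
        · by_cases hc : a = v
          · rw [if_pos (show idx n hn (a - 1) = ⟨v - 1, hmemv⟩ by
              rw [Fin.ext_iff, hia, hmval]; omega), if_pos hc.symm]
          · rw [if_neg (fun hcon => by rw [Fin.ext_iff, hia, hmval] at hcon; omega),
              if_neg (fun hcon => hc hcon.symm)]
        · by_cases hc : b = v
          · rw [if_pos (show idx n hn (b - 1) = ⟨v - 1, hmemv⟩ by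
              rw [Fin.ext_iff, hib, hmval]; omega), if_pos hc.symm]
          · rw [if_neg (fun hcon => by rw [Fin.ext_iff, hib, hmval] at hcon; omega),
              if_neg (fun hcon => hc hcon.symm)]
    · intro h m
      have hm := h ((m : ℕ) + 1)
      rw [expo_apply, hm, count_pair, Finsupp.add_apply, Finsupp.single_apply,
        Finsupp.single_apply]
      congr 1
      · by_cases hc : (m : ℕ) + 1 = a
        · rw [if_pos hc, if_pos (show idx n hn (a - 1) = m by rw [Fin.ext_iff, hia]; omega)]
        · rw [if_neg hc, if_neg (fun hcon => by rw [Fin.ext_iff, hia] at hcon; omega)]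
      · by_cases hc : (m : ℕ) + 1 = b
        · rw [if_pos hc, if_pos (show idx n hn (b - 1) = m by rw [Fin.ext_iff, hib]; omega)]
        · rw [if_neg hc, if_neg (fun hcon => by rw [Fin.ext_iff, hib] at hcon; omega)]
  rw [hval]
  constructor
  · intro h
    exact Nat.Partition.ext (h.trans (twoP_parts n a b ha hb hab).symm)
  · intro h
    rw [h]
    exact twoP_parts n a b ha hb hab

end StarAux

/-- For the star graph `S_n` on `n ≥ 4` vertices and any partition `λ = (λ₁, λ₂)` of `n`
with both parts at least `2`, the coefficient of `e_λ` in `X_{S_n}` equals `-n` if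
`λ₁ ≠ λ₂`, and `-n/2` if `λ₁ = λ₂`. -/
theorem star_coeff_e_two_part (n : ℕ) (hn : 4 ≤ n) (a b : ℕ) (ha : 2 ≤ a) (hb : 2 ≤ b)
    (hab : a + b = n)
    (c : n.Partition → ℚ)
    (hc : csf n (starGraph n) = ∑ μ : n.Partition, c μ • esymmPart (Fin n) ℚ μ) :
    c (twoP n a b hab) = if a = b then -(n : ℚ) / 2 else -(n : ℚ) := by
  have hn0 : 0 < n := by omega
  set t : Fin n →₀ ℕ :=
    Finsupp.single (StarAux.idx n hn0 (a - 1)) 1 + Finsupp.single (StarAux.idx n hn0 (b - 1)) 1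
    with ht
  have hid : (∑ k ∈ range n, ((-1 : ℚ) ^ (k + (n - 1)) * ((n - 1).choose k : ℚ)) •
        (StarAux.Pp n (n - k) * (X (StarAux.idx n hn0 0)) ^ k))
      = ∑ μ : n.Partition, c μ • monomial (StarAux.expo n hn0 μ) (1 : ℚ) := by
    apply StarAux.phi_injective n
    rw [map_sum, map_sum]
    have h1 : ∀ k ∈ range n,
        StarAux.phi n (((-1 : ℚ) ^ (k + (n - 1)) * ((n - 1).choose k : ℚ)) •
          (StarAux.Pp n (n - k) * (X (StarAux.idx n hn0 0)) ^ k))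
        = ((-1 : ℚ) ^ (k + (n - 1)) * ((n - 1).choose k : ℚ)) •
          (psum (Fin n) ℚ (n - k) * (esymm (Fin n) ℚ 1) ^ k) := by
      intro k _
      rw [map_smul, map_mul, map_pow, StarAux.phi_Pp, StarAux.phi_X,
        StarAux.idx_val n hn0 0 (by omega)]
    have h2 : ∀ μ ∈ (univ : Finset n.Partition),
        StarAux.phi n (c μ • monomial (StarAux.expo n hn0 μ) (1 : ℚ))
        = c μ • esymmPart (Fin n) ℚ μ := by
      intro μ _
      rw [map_smul, StarAux.phi_monomial_expo]
    rw [Finset.sum_congr rfl h1, Finset.sum_congr rfl h2, ← StarAux.csf_star n hn, hc]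
  have hco := congrArg (MvPolynomial.coeff t) hid
  rw [coeff_sum, coeff_sum] at hco
  simp only [coeff_smul, smul_eq_mul] at hco
  have hR : ∑ μ : n.Partition, c μ * coeff t (monomial (StarAux.expo n hn0 μ) (1 : ℚ))
      = c (twoP n a b hab) := by
    rw [Finset.sum_eq_single_of_mem (twoP n a b hab) (mem_univ _)]
    · rw [coeff_monomial, if_pos ((StarAux.expo_eq_iff n hn0 a b ha hb hab _).mpr rfl), mul_one]
    · intro μ _ hne
      rw [coeff_monomial,
        if_neg (fun hcon => hne ((StarAux.expo_eq_iff n hn0 a b ha hb hab μ).mp hcon)), mul_zero]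
  have hL : ∑ k ∈ range n, ((-1 : ℚ) ^ (k + (n - 1)) * ((n - 1).choose k : ℚ)) *
        coeff t (StarAux.Pp n (n - k) * (X (StarAux.idx n hn0 0)) ^ k)
      = (-1 : ℚ) ^ (n - 1) * (if a = b then (n : ℚ) / 2 else (-1) ^ n * n) := by
    rw [Finset.sum_eq_single_of_mem 0 (mem_range.mpr (by omega))]
    · rw [pow_zero, mul_one, Nat.sub_zero, Nat.choose_zero_right,
        StarAux.coeff_pair_Pp n hn0 a b ha hb hab]
      norm_num
    · intro k hk hkne
      have hk1 : 1 ≤ k := Nat.one_le_iff_ne_zero.mpr hkne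
      have hsplit : StarAux.Pp n (n - k) * (X (StarAux.idx n hn0 0)) ^ k
          = (StarAux.Pp n (n - k) * (X (StarAux.idx n hn0 0)) ^ (k - 1)) *
              X (StarAux.idx n hn0 0) := by
        rw [mul_assoc, ← pow_succ, show k - 1 + 1 = k by omega]
      rw [hsplit, coeff_mul_X', if_neg, mul_zero]
      intro hmem
      rw [Finsupp.mem_support_iff, ht, Finsupp.add_apply, Finsupp.single_apply,
        Finsupp.single_apply,
        if_neg (fun hcon => by
          rw [Fin.ext_iff, StarAux.idx_val n hn0 (a - 1) (by omega),
            StarAux.idx_val n hn0 0 (by omega)] at hcon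
          omega),
        if_neg (fun hcon => by
          rw [Fin.ext_iff, StarAux.idx_val n hn0 (b - 1) (by omega),
            StarAux.idx_val n hn0 0 (by omega)] at hcon
          omega)] at hmem
      exact hmem rfl
  rw [hL, hR] at hco
  rw [← hco]
  by_cases hab2 : a = b
  · rw [if_pos hab2, if_pos hab2]
    have hodd : Odd (n - 1) := ⟨a - 1, by omega⟩
    rw [hodd.neg_one_pow]
    ring
  · rw [if_neg hab2, if_neg hab2,
      show (-1 : ℚ) ^ (n - 1) * ((-1) ^ n * (n : ℚ)) = ((-1 : ℚ) ^ (n - 1 + n)) * n by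
        rw [pow_add]; ring,
      (show Odd (n - 1 + n) from ⟨n - 1, by omega⟩).neg_one_pow]
    ring
end
end
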